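/- arXiv:2008.06745 — 5 statements merged into one kernel-verified Lean document; each statement's English description precedes it below -/
import Mathlib

section
/- Let P be a Γ-colored d-complete poset such that for every color b, the set P_b is bounded above in P. Then P is finite. -/
namespace GCP

/-- A Dynkin diagram on a finite set `Γ` of colors, encoded by the integers
`θ a b` of its generalized Cartan matrix. -/
structure DynkinDiagram (Γ : Type*) [Fintype Γ] where
  θ : Γ → Γ → ℤ
  diag : ∀ a, θ a a = 2
  offdiag_nonpos : ∀ a b, a ≠ b → θ a b ≤ 0
  zero_iff : ∀ a b, a ≠ b → (θ a b = 0 ↔ θ b a = 0)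

variable {Γ : Type*} [Fintype Γ] {P : Type*} [PartialOrder P] [LocallyFiniteOrder P]

/-- Distinct colors `a` and `b` are adjacent when `θ a b < 0`. -/
def DynkinDiagram.Adj (D : DynkinDiagram Γ) (a b : Γ) : Prop :=
  a ≠ b ∧ D.θ a b < 0

/-- Distinct colors `a` and `b` are distant when `θ a b = 0`. -/
def DynkinDiagram.Distant (D : DynkinDiagram Γ) (a b : Γ) : Prop :=
  a ≠ b ∧ D.θ a b = 0

theorem DynkinDiagram.Adj.symm {D : DynkinDiagram Γ} {a b : Γ} (h : D.Adj a b) :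
    D.Adj b a :=
  ⟨h.1.symm, lt_of_le_of_ne (D.offdiag_nonpos b a h.1.symm)
    (fun h0 => h.2.ne ((D.zero_iff a b h.1).mpr h0))⟩

/-- The simple graph underlying a Dynkin diagram, with an edge between each
pair of adjacent colors. -/
def DynkinDiagram.graph (D : DynkinDiagram Γ) : SimpleGraph Γ where
  Adj a b := D.Adj a b
  symm := ⟨fun _ _ h => h.symm⟩
  loopless := ⟨fun _ h => h.1 rfl⟩

/-- The Dynkin diagram is connected: any two colors are joined by a path of
adjacencies. -/
def DynkinDiagram.Connected (D : DynkinDiagram Γ) : Prop :=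
  ∀ a b : Γ, Relation.ReflTransGen D.Adj a b

/-- A poset is connected: any two elements are linked by a finite chain of
comparabilities (equivalently, the poset cannot be written as the disjoint
union of two nonempty subposets). -/
def PosetConnected (P : Type*) [PartialOrder P] : Prop :=
  ∀ x y : P, Relation.ReflTransGen (fun u v : P => u ≤ v ∨ v ≤ u) x y

/-- `x < y` are consecutive elements of the color `a`. -/
def Consecutive (κ : P → Γ) (a : Γ) (x y : P) : Prop :=
  x < y ∧ κ x = a ∧ κ y = a ∧ ∀ z ∈ Finset.Ioo x y, κ z ≠ a

/-- EC: elements with equal colors are comparable. -/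
def EC (κ : P → Γ) : Prop := ∀ x y : P, κ x = κ y → x ≤ y ∨ y ≤ x

/-- NA: neighbors (covering pairs) have adjacent colors. -/
def NA (D : DynkinDiagram Γ) (κ : P → Γ) : Prop :=
  ∀ x y : P, x ⋖ y → D.Adj (κ x) (κ y)

/-- AC: elements with adjacent colors are comparable. -/
def AC (D : DynkinDiagram Γ) (κ : P → Γ) : Prop :=
  ∀ x y : P, D.Adj (κ x) (κ y) → x ≤ y ∨ y ≤ x

/-- ICE2: the census of the open interval between consecutive elements of a
color is two. -/
def ICE2 (D : DynkinDiagram Γ) (κ : P → Γ) : Prop :=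
  ∀ (a : Γ) (x y : P), Consecutive κ a x y →
    ∑ z ∈ Finset.Ioo x y, (-D.θ (κ z) a) = 2

/-- `U(x,S)`: elements of `S` above `x` with color adjacent to that of `x`. -/
def USet (D : DynkinDiagram Γ) (κ : P → Γ) (S : Set P) (x : P) : Set P :=
  {y ∈ S | x < y ∧ D.Adj (κ y) (κ x)}

/-- `L(x,S)`: elements of `S` below `x` with color adjacent to that of `x`. -/
def LSet (D : DynkinDiagram Γ) (κ : P → Γ) (S : Set P) (x : P) : Set P :=
  {y ∈ S | y < x ∧ D.Adj (κ y) (κ x)}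

/-- UCBk: for every `x` maximal among elements of its color, `U(x,P)` is
finite with census at most `k`. -/
def UCB (D : DynkinDiagram Γ) (κ : P → Γ) (k : ℕ) : Prop :=
  ∀ x : P, (∀ y : P, κ y = κ x → ¬ x < y) →
    ∃ hfin : (USet D κ Set.univ x).Finite,
      ∑ y ∈ hfin.toFinset, (-D.θ (κ y) (κ x)) ≤ (k : ℤ)

/-- LCBk: for every `x` minimal among elements of its color, `L(x,P)` is
finite with census at most `k`. -/
def LCB (D : DynkinDiagram Γ) (κ : P → Γ) (k : ℕ) : Prop :=
  ∀ x : P, (∀ y : P, κ y = κ x → ¬ y < x) →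
    ∃ hfin : (LSet D κ Set.univ x).Finite,
      ∑ y ∈ hfin.toFinset, (-D.θ (κ y) (κ x)) ≤ (k : ℤ)

/-- The coloring properties of a Γ-colored d-complete poset (the coloring is
required to be surjective separately). -/
def DComplete (D : DynkinDiagram Γ) (κ : P → Γ) : Prop :=
  EC κ ∧ NA D κ ∧ AC D κ ∧ ICE2 D κ ∧ UCB D κ 1

/-- G1: each `P_a` and each `P_b ∪ P_c` for adjacent `b, c` is a chain. -/
def G1 (D : DynkinDiagram Γ) (κ : P → Γ) : Prop :=
  (∀ a : Γ, IsChain (· ≤ ·) {x : P | κ x = a}) ∧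
    ∀ b c : Γ, D.Adj b c → IsChain (· ≤ ·) {x : P | κ x = b ∨ κ x = c}

/-- G2: the order is the minimal partial order extending the given orders on
the chains `P_a` and `P_b ∪ P_c`; i.e. every relation `x ≤ y` lies in the
reflexive transitive closure of the relations between pairs of equal or
adjacent colors. -/
def G2 (D : DynkinDiagram Γ) (κ : P → Γ) : Prop :=
  ∀ x y : P, x ≤ y →
    Relation.ReflTransGen (fun u v : P => u ≤ v ∧ (κ u = κ v ∨ D.Adj (κ u) (κ v))) x y

/-- G3: every color set `P_a` is order-isomorphic to `ℤ`. -/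
def G3 (κ : P → Γ) : Prop := ∀ a : Γ, Nonempty ({x : P | κ x = a} ≃o ℤ)

/-- G4: for adjacent colors `a, b`, every element of color `a` has a neighbor
of color `b`. -/
def G4 (D : DynkinDiagram Γ) (κ : P → Γ) : Prop :=
  ∀ a b : Γ, D.Adj a b → ∀ x : P, κ x = a → ∃ y : P, κ y = b ∧ (x ⋖ y ∨ y ⋖ x)

/-- G5: the sum of `θ (κ z) a` over the closed interval between consecutive
elements of color `a` is two. -/
def G5 (D : DynkinDiagram Γ) (κ : P → Γ) : Prop :=
  ∀ (a : Γ) (x y : P), Consecutive κ a x y →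
    ∑ z ∈ Finset.Icc x y, D.θ (κ z) a = 2

/-- A full heap: a Γ-colored poset satisfying G1–G5. -/
def FullHeap (D : DynkinDiagram Γ) (κ : P → Γ) : Prop :=
  G1 D κ ∧ G2 D κ ∧ G3 κ ∧ G4 D κ ∧ G5 D κ

/-- S1: neighbors have equal or adjacent colors and incomparable elements
have distant colors. -/
def S1 (D : DynkinDiagram Γ) (κ : P → Γ) : Prop :=
  (∀ x y : P, x ⋖ y → κ x = κ y ∨ D.Adj (κ x) (κ y)) ∧
    ∀ x y : P, ¬ x ≤ y → ¬ y ≤ x → D.Distant (κ x) (κ y)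

/-- S2: the open interval between consecutive elements of color `a` contains
either exactly two elements of color adjacent to `a`, both `1`-adjacent to
`a`, or exactly one element, whose color is `2`-adjacent to `a`. -/
def S2 (D : DynkinDiagram Γ) (κ : P → Γ) : Prop :=
  ∀ (a : Γ) (x y : P), Consecutive κ a x y →
    (∃ u ∈ Finset.Ioo x y, ∃ v ∈ Finset.Ioo x y, u ≠ v ∧
        D.θ (κ u) a = -1 ∧ D.θ (κ v) a = -1 ∧
        ∀ z ∈ Finset.Ioo x y, D.Adj (κ z) a → z = u ∨ z = v) ∨
    (∃ w : P, Finset.Ioo x y = {w} ∧ D.θ (κ w) a = -2)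

/-- S3: an element maximal among elements of its color is covered by at most
one element; any such cover has color `1`-adjacent to it and is maximal among
elements of its own color. -/
def S3 (D : DynkinDiagram Γ) (κ : P → Γ) : Prop :=
  ∀ x : P, (∀ y : P, κ y = κ x → ¬ x < y) →
    (∀ y z : P, x ⋖ y → x ⋖ z → y = z) ∧
      ∀ y : P, x ⋖ y → D.θ (κ y) (κ x) = -1 ∧ ∀ z : P, κ z = κ y → ¬ y < z

/-- S4: the underlying simple graph of the Dynkin diagram is acyclic. -/
def S4 (D : DynkinDiagram Γ) : Prop := D.graph.IsAcyclic

/-- The coloring properties of a dominant minuscule heap (the poset is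
additionally required to be finite, and the coloring surjective). -/
def DominantMinusculeHeapProps (D : DynkinDiagram Γ) (κ : P → Γ) : Prop :=
  S1 D κ ∧ S2 D κ ∧ S3 D κ ∧ S4 D

/-- The color set `P_b` is bounded above in `P`. -/
def ColorBddAbove (κ : P → Γ) (b : Γ) : Prop := ∃ u : P, ∀ x : P, κ x = b → x ≤ u

/-- The color set `P_b` is bounded below in `P`. -/
def ColorBddBelow (κ : P → Γ) (b : Γ) : Prop := ∃ l : P, ∀ x : P, κ x = b → l ≤ x



section Statement9Aux

set_option linter.unusedSectionVars false
set_option maxHeartbeats 1600000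



variable (D : DynkinDiagram Γ) (κ : P → Γ)
set_option linter.unusedSectionVars false

/-- Each nonempty color fiber that is bounded above has a maximum. -/
lemma exists_color_max (hEC : EC κ) (c : Γ) (x₀ : P) (hx₀ : κ x₀ = c)
    (hbdd : ColorBddAbove κ c) : ∃ m : P, κ m = c ∧ ∀ x : P, κ x = c → x ≤ m := by
  obtain ⟨u, hu⟩ := hbdd
  have hS : ({x : P | κ x = c ∧ x₀ ≤ x} : Set P).Finite := by
    apply Set.Finite.subset (Set.finite_Icc x₀ u)
    rintro x ⟨hx, hx0⟩
    exact ⟨hx0, hu x hx⟩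
  have hne : ({x : P | κ x = c ∧ x₀ ≤ x} : Set P).Nonempty := ⟨x₀, hx₀, le_refl _⟩
  obtain ⟨m, hm, hmax⟩ := Set.Finite.exists_maximalFor id _ hS hne
  refine ⟨m, hm.1, fun x hx => ?_⟩
  rcases hEC x m (by rw [hx, hm.1]) with h | h
  · exact h
  · have hxS : x ∈ {x : P | κ x = c ∧ x₀ ≤ x} := ⟨hx, le_trans hm.2 h⟩
    have := hmax hxS h
    exact this

/-- Principal filters are finite. -/
lemma filter_finite (hEC : EC κ) (hsurj : Function.Surjective κ)
    (hbdd : ∀ b : Γ, ColorBddAbove κ b) (x : P) :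
    ({y : P | x ≤ y} : Set P).Finite := by
  choose m hm hm' using fun c =>
    exists_color_max κ hEC c (hsurj c).choose (hsurj c).choose_spec (hbdd c)
  have : ({y : P | x ≤ y} : Set P) ⊆ ⋃ c : Γ, Set.Icc x (m c) := by
    intro y hy
    exact Set.mem_iUnion.2 ⟨κ y, hy, hm' (κ y) y rfl⟩
  exact Set.Finite.subset (Set.finite_iUnion fun c => Set.finite_Icc _ _) this

/-- If `P` is infinite, some fiber is infinite. -/
lemma exists_infinite_fiber (hP : Infinite P) :
    ∃ c : Γ, ({x : P | κ x = c} : Set P).Infinite := by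
  by_contra h
  push_neg at h
  have : (Set.univ : Set P).Finite := by
    have : (Set.univ : Set P) = ⋃ c : Γ, {x : P | κ x = c} := by
      ext x; simp
    rw [this]
    exact Set.finite_iUnion h
  exact Set.infinite_univ this

/-- A strictly descending sequence in an infinite fiber. -/
lemma exists_descending (hEC : EC κ) {c : Γ}
    (hinf : ({x : P | κ x = c} : Set P).Infinite) (hbdd : ColorBddAbove κ c) :
    ∃ y : ℕ → P, (∀ n, κ (y n) = c) ∧ ∀ n, y (n + 1) < y n := by
  -- step function: given z in fiber, find a smaller element of the fiber
  have step : ∀ z : P, κ z = c → ∃ w : P, κ w = c ∧ w < z := by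
    intro z hz
    have hfin : ({x : P | κ x = c ∧ z ≤ x} : Set P).Finite := by
      obtain ⟨u, hu⟩ := hbdd
      apply Set.Finite.subset (Set.finite_Icc z u)
      rintro x ⟨hx, hxz⟩; exact ⟨hxz, hu x hx⟩
    have : ({x : P | κ x = c} \ {x : P | κ x = c ∧ z ≤ x} : Set P).Infinite :=
      Set.Infinite.diff hinf hfin
    obtain ⟨w, hw⟩ := this.nonempty
    simp only [Set.mem_diff, Set.mem_setOf_eq, not_and] at hw
    have hwc := hw.1
    have hnz : ¬ z ≤ w := hw.2 hwc
    rcases hEC w z (by rw [hwc, hz]) with h | h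
    · exact ⟨w, hwc, lt_of_le_of_ne h (fun he => hnz (he ▸ le_refl _))⟩
    · exact absurd h hnz
  obtain ⟨z₀, hz₀⟩ := hinf.nonempty
  choose stepf hstepf1 hstepf2 using step
  let g : ℕ → {x : P // κ x = c} := fun n =>
    Nat.rec (motive := fun _ => {x : P // κ x = c}) ⟨z₀, hz₀⟩
      (fun _ p => ⟨stepf p.1 p.2, hstepf1 p.1 p.2⟩) n
  exact ⟨fun n => (g n).1, fun n => (g n).2, fun n => hstepf2 _ _⟩




/-- From an infinite poset with finite principal filters containing a descending
sequence, extract an injective "top-down reading": an injective `f : ℕ → P` such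
that every element above `f n` equals `f m` for some `m < n`. -/
lemma exists_reading (y : ℕ → P) (hdesc : ∀ n, y (n + 1) < y n)
    (hupfin : ∀ x : P, ({z : P | x ≤ z} : Set P).Finite) :
    ∃ f : ℕ → P, Function.Injective f ∧ ∀ n, ∀ z : P, f n < z → ∃ m, m < n ∧ f m = z := by
  classical
  -- FF n : the finite filter above y n
  let FF : ℕ → Finset P := fun n => (hupfin (y n)).toFinset
  have hFFmem : ∀ n x, x ∈ FF n ↔ y n ≤ x := by
    intro n x; simp [FF, Set.Finite.mem_toFinset]
  have hFFmono : ∀ n, FF n ⊆ FF (n + 1) := by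
    intro n x hx
    rw [hFFmem] at hx ⊢
    exact le_trans (le_of_lt (hdesc n)) hx
  have hymem : ∀ m n, m ≤ n → y m ∈ FF n := by
    intro m n h
    rw [hFFmem]
    clear hFFmem hFFmono
    induction n with
    | zero => simp_all
    | succ k ih =>
      rcases Nat.lt_or_ge m (k+1) with h' | h'
      · exact le_trans (le_of_lt (hdesc k)) (ih (Nat.lt_succ_iff.mp h'))
      · have : m = k + 1 := le_antisymm h h'
        subst this; exact le_refl _
  have hyinj : Function.Injective y := by
    have hsa : StrictAnti y := strictAnti_nat_of_succ_lt hdesc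
    exact hsa.injective
  have hcard : ∀ n, n + 1 ≤ (FF n).card := by
    intro n
    have : (Finset.range (n+1)).card ≤ (FF n).card := by
      apply Finset.card_le_card_of_injOn y
      · intro m hm; exact hymem m n (Nat.lt_succ_iff.mp (Finset.mem_range.mp hm))
      · exact fun a _ b _ h => hyinj h
    simpa using this
  -- pick a maximal element of (FF n) \ s
  let pick : ℕ → Finset P → P := fun n s =>
    if h : ((FF n) \ s).Nonempty then
      (Finset.exists_maximal h).choose
    else y n
  have hpick : ∀ n s, s.card < (FF n).card →
      pick n s ∈ FF n ∧ pick n s ∉ s ∧ ∀ z ∈ FF n, z ∉ s → ¬ pick n s < z := by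
    intro n s hlt
    have hne : ((FF n) \ s).Nonempty := by
      rw [Finset.sdiff_nonempty]
      intro hsub
      exact absurd (Finset.card_le_card hsub) (not_le.mpr hlt)
    have hspec := (Finset.exists_maximal hne).choose_spec
    simp only [pick, dif_pos hne]
    obtain ⟨hmem, hmax⟩ := hspec
    rw [Finset.mem_sdiff] at hmem
    exact ⟨hmem.1, hmem.2, fun z hz hzs hlt => absurd hlt (not_lt_of_ge (hmax (Finset.mem_sdiff.mpr ⟨hz, hzs⟩) hlt.le))⟩
  -- the listed sets
  obtain ⟨fs, hfs0, hfsS⟩ : ∃ fs : ℕ → Finset P, fs 0 = ∅ ∧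
      ∀ n, fs (n + 1) = insert (pick n (fs n)) (fs n) :=
    ⟨fun n => Nat.rec ∅ (fun k s => insert (pick k s) s) n, rfl, fun n => rfl⟩
  let f : ℕ → P := fun n => pick n (fs n)
  have hfscard : ∀ n, (fs n).card = n := by
    intro n
    induction n with
    | zero => simp [hfs0]
    | succ k ih =>
      rw [hfsS]
      rw [Finset.card_insert_of_notMem]
      · rw [ih]
      · exact (hpick k (fs k) (by rw [ih]; exact Nat.lt_of_lt_of_le (Nat.lt_succ_self k) (hcard k))).2.1
  have hcard' : ∀ n, (fs n).card < (FF n).card := fun n => by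
    rw [hfscard]; exact Nat.lt_of_lt_of_le (Nat.lt_succ_self n) (hcard n)
  have hfmem : ∀ n, f n ∈ FF n ∧ f n ∉ fs n ∧ ∀ z ∈ FF n, z ∉ fs n → ¬ f n < z :=
    fun n => hpick n (fs n) (hcard' n)
  have hfsmem : ∀ n x, x ∈ fs n ↔ ∃ m, m < n ∧ f m = x := by
    intro n
    induction n with
    | zero => simp [hfs0]
    | succ k ih =>
      intro x
      rw [hfsS, Finset.mem_insert]
      constructor
      · rintro (h | h)
        · exact ⟨k, Nat.lt_succ_self k, h.symm⟩
        · obtain ⟨m, hm, hfm⟩ := (ih x).mp h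
          exact ⟨m, Nat.lt_succ_of_lt hm, hfm⟩
      · rintro ⟨m, hm, hfm⟩
        rcases Nat.lt_or_ge m k with h' | h'
        · exact Or.inr ((ih x).mpr ⟨m, h', hfm⟩)
        · have : m = k := Nat.le_antisymm (Nat.lt_succ_iff.mp hm) h'
          subst this; exact Or.inl hfm.symm
  have hLE : ∀ n, ∀ z : P, f n < z → ∃ m, m < n ∧ f m = z := by
    intro n z hz
    have hzFF : z ∈ FF n := by
      rw [hFFmem]
      exact le_trans ((hFFmem n (f n)).mp (hfmem n).1) (le_of_lt hz)
    by_cases hzs : z ∈ fs n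
    · exact (hfsmem n z).mp hzs
    · exact absurd hz ((hfmem n).2.2 z hzFF hzs)
  refine ⟨f, ?_, hLE⟩
  intro a b hab
  by_contra hne
  rcases Nat.lt_or_ge a b with h | h
  · exact (hfmem b).2.1 ((hfsmem b (f b)).mpr ⟨a, h, hab⟩)
  · have h' : b < a := lt_of_le_of_ne h (Ne.symm hne)
    exact (hfmem a).2.1 ((hfsmem a (f a)).mpr ⟨b, h', hab.symm⟩)




variable (D : DynkinDiagram Γ) (κ : P → Γ) (f : ℕ → P)
  (hinj : Function.Injective f)
  (hLE : ∀ n, ∀ z : P, f n < z → ∃ m, m < n ∧ f m = z)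
  (hEC : EC κ) (hAC : AC D κ) (hICE : ICE2 D κ) (hUCB : UCB D κ 1)


include hinj hLE in
/-- Earlier letters are never below later ones. -/
lemma word_not_below : ∀ m n, m < n → ¬ f m < f n := by
  intro m n hmn h
  obtain ⟨i, hi, hfi⟩ := hLE m (f n) h
  exact absurd (hinj hfi) (by omega)

include hinj hLE hEC hAC in
/-- If `i < n` and the colors are equal or adjacent (`θ ≠ 0`), then `f n < f i`. -/
lemma word_gt : ∀ i n, i < n → D.θ (κ (f i)) (κ (f n)) ≠ 0 → f n < f i := by
  intro i n hin hθ
  have hcomp : f i ≤ f n ∨ f n ≤ f i := by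
    by_cases hc : κ (f i) = κ (f n)
    · exact hEC _ _ hc
    · refine hAC _ _ ⟨hc, ?_⟩
      exact lt_of_le_of_ne (D.offdiag_nonpos _ _ hc) hθ
  have hne : f i ≠ f n := fun h => absurd (hinj h) (by omega)
  rcases hcomp with h | h
  · exact absurd (lt_of_le_of_ne h hne) (word_not_below f hinj hLE i n hin)
  · exact lt_of_le_of_ne h (Ne.symm hne)

include hinj hLE hEC hAC hUCB in
/-- Census before the first occurrence of a color is between 0 and 1. -/
lemma word_first (c : Γ) (t : ℕ) (hc : κ (f t) = c) (hfirst : ∀ i, i < t → κ (f i) ≠ c) :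
    0 ≤ ∑ i ∈ Finset.range t, (-D.θ (κ (f i)) c) ∧
      ∑ i ∈ Finset.range t, (-D.θ (κ (f i)) c) ≤ 1 := by
  constructor
  · apply Finset.sum_nonneg
    intro i hi
    rw [Finset.mem_range] at hi
    simp only [neg_nonneg]
    exact D.offdiag_nonpos _ _ (hfirst i hi)
  · have hmax : ∀ y : P, κ y = κ (f t) → ¬ f t < y := by
      intro y hy hlt
      obtain ⟨m, hm, hfm⟩ := hLE t y hlt
      exact hfirst m hm (by rw [hfm, hy, hc])
    obtain ⟨hfin, hsum⟩ := hUCB (f t) hmax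
    have key : ∑ i ∈ Finset.range t, (-D.θ (κ (f i)) c)
        = ∑ y ∈ hfin.toFinset, (-D.θ (κ y) (κ (f t))) := by
      rw [← Finset.sum_filter_of_ne (p := fun i => D.θ (κ (f i)) c ≠ 0)
        (by intro i _ h hh; exact h (by rw [hh, neg_zero]))]
      apply Finset.sum_bij (fun i _ => f i)
      · intro i hi
        rw [Finset.mem_filter, Finset.mem_range] at hi
        rw [Set.Finite.mem_toFinset]
        have hadj : D.Adj (κ (f i)) c :=
          ⟨hfirst i hi.1, lt_of_le_of_ne (D.offdiag_nonpos _ _ (hfirst i hi.1)) hi.2⟩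
        have hgt : f t < f i := word_gt D κ f hinj hLE hEC hAC i t hi.1
          (by rw [hc]; exact ne_of_lt hadj.2)
        show f i ∈ USet D κ Set.univ (f t)
        refine ⟨trivial, hgt, ?_⟩
        rw [hc]; exact hadj
      · intro a ha b hb hab; exact hinj hab
      · intro y hy
        rw [Set.Finite.mem_toFinset] at hy
        have hy' : f t < y ∧ D.Adj (κ y) (κ (f t)) := hy.2
        obtain ⟨hlt, hadj⟩ := hy'
        obtain ⟨m, hm, hfm⟩ := hLE t y hlt
        refine ⟨m, ?_, hfm⟩
        rw [Finset.mem_filter, Finset.mem_range]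
        refine ⟨hm, ?_⟩
        rw [hfm]
        rw [hc] at hadj
        exact ne_of_lt hadj.2
      · intro i hi; rw [hc]
    rw [key]
    exact_mod_cast hsum

include hinj hLE hEC hAC hICE in
/-- Census between consecutive occurrences of a color is exactly 2. -/
lemma word_consec (c : Γ) (m n : ℕ) (hmn : m < n) (hcm : κ (f m) = c) (hcn : κ (f n) = c)
    (hbetween : ∀ i, m < i → i < n → κ (f i) ≠ c) :
    ∑ i ∈ Finset.Ioo m n, (-D.θ (κ (f i)) c) = 2 := by
  have hlt : f n < f m := word_gt D κ f hinj hLE hEC hAC m n hmn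
    (by rw [hcm, hcn, D.diag]; norm_num)
  have hconsec : Consecutive κ c (f n) (f m) := by
    refine ⟨hlt, hcn, hcm, ?_⟩
    intro z hz hzc
    rw [Finset.mem_Ioo] at hz
    obtain ⟨i, hi, hfi⟩ := hLE n z hz.1
    subst hfi
    have him : i ≠ m := fun h => absurd rfl (h ▸ ne_of_lt hz.2)
    rcases Nat.lt_or_ge i m with h' | h'
    · exact absurd hz.2 (word_not_below f hinj hLE i m h')
    · exact hbetween i (lt_of_le_of_ne h' (Ne.symm him)) hi hzc
  have hsum := hICE c (f n) (f m) hconsec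
  rw [← hsum]
  rw [← Finset.sum_filter_of_ne (s := Finset.Ioo m n)
      (p := fun i => D.θ (κ (f i)) c ≠ 0)
      (by intro i _ h hh; exact h (by rw [hh, neg_zero])),
    ← Finset.sum_filter_of_ne (s := Finset.Ioo (f n) (f m))
      (p := fun z => D.θ (κ z) c ≠ 0)
      (by intro z _ h hh; exact h (by rw [hh, neg_zero]))]
  apply Finset.sum_bij (fun i _ => f i)
  · intro i hi
    rw [Finset.mem_filter, Finset.mem_Ioo] at hi
    obtain ⟨⟨him, hin⟩, hθ⟩ := hi
    rw [Finset.mem_filter, Finset.mem_Ioo]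
    refine ⟨⟨?_, ?_⟩, hθ⟩
    · exact word_gt D κ f hinj hLE hEC hAC i n hin (by rw [hcn]; exact hθ)
    · -- f i < f m
      have hc' : κ (f i) ≠ κ (f m) := by rw [hcm]; exact hbetween i him hin
      have hθ' : D.θ (κ (f m)) (κ (f i)) ≠ 0 := by
        intro h
        apply hθ
        rw [← hcm]
        exact (D.zero_iff _ _ (Ne.symm hc')).mp h
      exact word_gt D κ f hinj hLE hEC hAC m i him hθ'
  · intro a ha b hb hab; exact hinj hab
  · intro z hz
    rw [Finset.mem_filter, Finset.mem_Ioo] at hz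
    obtain ⟨⟨hz1, hz2⟩, hθ⟩ := hz
    obtain ⟨i, hi, hfi⟩ := hLE n z hz1
    subst hfi
    refine ⟨i, ?_, rfl⟩
    rw [Finset.mem_filter, Finset.mem_Ioo]
    have him : i ≠ m := fun h => absurd rfl (h ▸ ne_of_lt hz2)
    rcases Nat.lt_or_ge i m with h' | h'
    · exact absurd hz2 (word_not_below f hinj hLE i m h')
    · exact ⟨⟨lt_of_le_of_ne h' (Ne.symm him), hi⟩, hθ⟩
  · intro i hi; rfl




section WithDecEq
variable [DecidableEq Γ]

open Classical in
/-- Symmetrizer for a forest-structured recursion: `Pr g c` means `g` is the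
(unique) earlier neighbor of `c`. -/
noncomputable def symd (θ : Γ → Γ → ℤ) (tt : Γ → ℕ) (Pr : Γ → Γ → Prop)
    (hPr : ∀ g c, Pr g c → tt g < tt c) (c : Γ) : ℚ :=
  if h : ∃ g, Pr g c then
    symd θ tt Pr hPr h.choose * ((θ h.choose c : ℚ) / (θ c h.choose : ℚ))
  else 1
termination_by tt c
decreasing_by exact hPr _ _ h.choose_spec

open Classical in
theorem symd_pos (θ : Γ → Γ → ℤ) (tt : Γ → ℕ) (Pr : Γ → Γ → Prop)
    (hPr : ∀ g c, Pr g c → tt g < tt c)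
    (hratio : ∀ g c, Pr g c → 0 < (θ g c : ℚ) / (θ c g : ℚ)) :
    ∀ c, 0 < symd θ tt Pr hPr c := by
  have H : ∀ n c, tt c ≤ n → 0 < symd θ tt Pr hPr c := by
    intro n
    induction n using Nat.strong_induction_on with
    | _ n ih =>
      intro c hc
      rw [symd]
      split
      · next h =>
        exact mul_pos (ih (tt h.choose)
          (lt_of_lt_of_le (hPr _ _ h.choose_spec) hc) _ le_rfl)
          (hratio _ _ h.choose_spec)
      · norm_num
  exact fun c => H (tt c) c le_rfl

/-- Quadratic form. -/
def QF (B : Γ → Γ → ℚ) (x : Γ → ℚ) : ℚ := ∑ a, ∑ b, x a * x b * B a b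

/-- Bilinear form. -/
def CF (B : Γ → Γ → ℚ) (x y : Γ → ℚ) : ℚ := ∑ a, ∑ b, x a * y b * B a b

lemma QF_add (B : Γ → Γ → ℚ) (x y : Γ → ℚ) :
    QF B (fun c => x c + y c) = QF B x + CF B x y + CF B y x + QF B y := by
  unfold QF CF
  rw [← Finset.sum_add_distrib, ← Finset.sum_add_distrib, ← Finset.sum_add_distrib]
  refine Finset.sum_congr rfl fun a _ => ?_
  rw [← Finset.sum_add_distrib, ← Finset.sum_add_distrib, ← Finset.sum_add_distrib]
  refine Finset.sum_congr rfl fun b _ => ?_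
  ring

lemma CF_add_right (B : Γ → Γ → ℚ) (x y z : Γ → ℚ) :
    CF B x (fun c => y c + z c) = CF B x y + CF B x z := by
  unfold CF
  rw [← Finset.sum_add_distrib]
  refine Finset.sum_congr rfl fun a _ => ?_
  rw [← Finset.sum_add_distrib]
  refine Finset.sum_congr rfl fun b _ => ?_
  ring

lemma CF_add_left (B : Γ → Γ → ℚ) (x y z : Γ → ℚ) :
    CF B (fun c => y c + z c) x = CF B y x + CF B z x := by
  unfold CF
  rw [← Finset.sum_add_distrib]
  refine Finset.sum_congr rfl fun a _ => ?_
  rw [← Finset.sum_add_distrib]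
  refine Finset.sum_congr rfl fun b _ => ?_
  ring

lemma CF_right (B : Γ → Γ → ℚ) (x : Γ → ℚ) (c₀ : Γ) :
    CF B x (fun c => if c = c₀ then 1 else 0) = ∑ a, x a * B a c₀ := by
  unfold CF
  refine Finset.sum_congr rfl fun a _ => ?_
  have h1 : ∀ b, x a * (if b = c₀ then (1:ℚ) else 0) * B a b
      = if b = c₀ then x a * B a b else 0 := by
    intro b; by_cases h : b = c₀ <;> simp [h]
  rw [Finset.sum_congr rfl (fun b _ => h1 b),
    Finset.sum_ite_eq' Finset.univ c₀ (fun b => x a * B a b)]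
  simp

lemma CF_left (B : Γ → Γ → ℚ) (x : Γ → ℚ) (c₀ : Γ) :
    CF B (fun c => if c = c₀ then 1 else 0) x = ∑ b, x b * B c₀ b := by
  unfold CF
  have h1 : ∀ a, (∑ b, (if a = c₀ then (1:ℚ) else 0) * x b * B a b)
      = if a = c₀ then ∑ b, x b * B a b else 0 := by
    intro a; by_cases h : a = c₀ <;> simp [h]
  rw [Finset.sum_congr rfl (fun a _ => h1 a),
    Finset.sum_ite_eq' Finset.univ c₀ (fun a => ∑ b, x b * B a b)]
  simp

lemma QF_single (B : Γ → Γ → ℚ) (c₀ : Γ) :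
    QF B (fun c => if c = c₀ then 1 else 0) = B c₀ c₀ := by
  unfold QF
  have h1 : ∀ a, (∑ b, (if a = c₀ then (1:ℚ) else 0) * (if b = c₀ then (1:ℚ) else 0) * B a b)
      = if a = c₀ then (∑ b, (if b = c₀ then (1:ℚ) else 0) * B a b) else 0 := by
    intro a; by_cases h : a = c₀ <;> simp [h]
  rw [Finset.sum_congr rfl (fun a _ => h1 a),
    Finset.sum_ite_eq' Finset.univ c₀ (fun a => ∑ b, (if b = c₀ then (1:ℚ) else 0) * B a b)]
  have h2 : ∀ b, (if b = c₀ then (1:ℚ) else 0) * B c₀ b = if b = c₀ then B c₀ b else 0 := by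
    intro b; by_cases h : b = c₀ <;> simp [h]
  simp only [Finset.mem_univ, if_true]
  rw [Finset.sum_congr rfl (fun b _ => h2 b),
    Finset.sum_ite_eq' Finset.univ c₀ (fun b => B c₀ b)]
  simp




/-- Number of occurrences of color `c` among the first `n` letters. -/
def cnt (col : ℕ → Γ) (n : ℕ) (c : Γ) : ℕ :=
  ((Finset.range n).filter fun i => col i = c).card

/-- Partial census sums. -/
def sgz (θ : Γ → Γ → ℤ) (col : ℕ → Γ) (n : ℕ) (c : Γ) : ℤ :=
  ∑ i ∈ Finset.range n, θ (col i) c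

lemma cnt_zero (col : ℕ → Γ) (c : Γ) : cnt col 0 c = 0 := by simp [cnt]

lemma cnt_succ (col : ℕ → Γ) (n : ℕ) (c : Γ) :
    cnt col (n + 1) c = cnt col n c + (if col n = c then 1 else 0) := by
  unfold cnt
  rw [Finset.range_add_one, Finset.filter_insert]
  by_cases h : col n = c
  · rw [if_pos h, if_pos h, Finset.card_insert_of_notMem (by simp)]
  · rw [if_neg h, if_neg h, add_zero]

lemma cnt_mono (col : ℕ → Γ) {m n : ℕ} (h : m ≤ n) (c : Γ) :
    cnt col m c ≤ cnt col n c := by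
  unfold cnt
  apply Finset.card_le_card
  apply Finset.filter_subset_filter
  exact Finset.range_subset_range.mpr h

lemma cnt_play (col : ℕ → Γ) {n : ℕ} {c : Γ} (h : col n = c) :
    cnt col n c + 1 ≤ cnt col (n + 1) c := by
  rw [cnt_succ, if_pos h]

lemma cnt_stable (col : ℕ → Γ) {N : ℕ} {c : Γ} (h : ∀ j, N ≤ j → col j ≠ c) :
    ∀ n, N ≤ n → cnt col n c = cnt col N c := by
  intro n hn
  induction n with
  | zero => cases Nat.le_zero.mp hn; rfl
  | succ k ih =>
    rcases Nat.lt_or_ge N (k+1) with h' | h'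
    · have hk : N ≤ k := Nat.lt_succ_iff.mp h'
      rw [cnt_succ, if_neg (h k hk), add_zero, ih hk]
    · have : N = k + 1 := le_antisymm hn h'
      rw [this]

lemma cnt_unplayed (col : ℕ → Γ) {c : Γ} (h : ∀ i, col i ≠ c) (n : ℕ) :
    cnt col n c = 0 := by
  unfold cnt
  rw [Finset.card_eq_zero, Finset.filter_eq_empty_iff]
  exact fun i _ => h i

lemma cnt_pos_played (col : ℕ → Γ) {c : Γ} {n : ℕ} (h : cnt col n c ≠ 0) :
    ∃ i, col i = c := by
  by_contra hc
  push_neg at hc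
  exact h (cnt_unplayed col hc n)

lemma sg_succ (θ : Γ → Γ → ℤ) (col : ℕ → Γ) (n : ℕ) (c : Γ) :
    sgz θ col (n + 1) c = sgz θ col n c + θ (col n) c := by
  unfold sgz; rw [Finset.sum_range_succ]

lemma sg_split (θ : Γ → Γ → ℤ) (col : ℕ → Γ) {m n : ℕ} (h : m < n) (c : Γ) :
    sgz θ col n c = sgz θ col m c + θ (col m) c + ∑ i ∈ Finset.Ioo m n, θ (col i) c := by
  unfold sgz
  rw [Finset.range_eq_Ico, ← Finset.sum_Ico_consecutive _ (Nat.zero_le (m+1)) h,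
    ← Finset.range_eq_Ico, Finset.sum_range_succ, Finset.Ico_add_one_left_eq_Ioo]

lemma sg_as_sum (θ : Γ → Γ → ℤ) (col : ℕ → Γ) (n : ℕ) (c : Γ) :
    sgz θ col n c = ∑ d, (cnt col n d : ℤ) * θ d c := by
  unfold sgz cnt
  rw [← Finset.sum_fiberwise (Finset.range n) (fun i => col i) (fun i => θ (col i) c)]
  refine Finset.sum_congr rfl fun d _ => ?_
  rw [Finset.sum_congr rfl (fun i hi => by
    rw [Finset.mem_filter] at hi
    rw [hi.2] : ∀ i ∈ (Finset.range n).filter (fun i => col i = d),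
      θ (col i) c = θ d c)]
  rw [Finset.sum_const, nsmul_eq_mul]


open Classical in
theorem no_infinite_word (θ : Γ → Γ → ℤ) (hdiag : ∀ a, θ a a = 2)
    (hoff : ∀ a b : Γ, a ≠ b → θ a b ≤ 0)
    (hzero : ∀ a b : Γ, a ≠ b → (θ a b = 0 ↔ θ b a = 0))
    (col : ℕ → Γ)
    (hfirst : ∀ (c : Γ) (t : ℕ), col t = c → (∀ i, i < t → col i ≠ c) →
        ∑ i ∈ Finset.range t, (-θ (col i) c) ≤ 1)
    (hconsec : ∀ (c : Γ) (m n : ℕ), m < n → col m = c → col n = c →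
        (∀ i, m < i → i < n → col i ≠ c) →
        ∑ i ∈ Finset.Ioo m n, (-θ (col i) c) = 2) : False := by
  classical
  -- first-occurrence time
  let tt : Γ → ℕ := fun c => if h : ∃ n, col n = c then Nat.find h else 0
  have htt1 : ∀ c, (∃ n, col n = c) → col (tt c) = c := by
    intro c h
    simp only [tt, dif_pos h]
    exact Nat.find_spec h
  have htt2 : ∀ c i, i < tt c → col i ≠ c := by
    intro c i hi
    by_cases h : ∃ n, col n = c
    · simp only [tt, dif_pos h] at hi
      exact Nat.find_min h hi
    · simp only [tt, dif_neg h] at hi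
      omega
  have htt3 : ∀ c n, col n = c → tt c ≤ n := by
    intro c n h
    have hp : ∃ m, col m = c := ⟨n, h⟩
    simp only [tt, dif_pos hp]
    exact Nat.find_min' hp h
  -- initial census
  let μ : Γ → ℤ := fun c => ∑ i ∈ Finset.range (tt c), (-θ (col i) c)
  have hμ0 : ∀ c, 0 ≤ μ c := by
    intro c
    apply Finset.sum_nonneg
    intro i hi
    rw [Finset.mem_range] at hi
    simp only [neg_nonneg]
    exact hoff _ _ (htt2 c i hi)
  have hμ1 : ∀ c, (∃ n, col n = c) → μ c ≤ 1 := by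
    intro c h
    exact hfirst c (tt c) (htt1 c h) (fun i hi => htt2 c i hi)
  -- the play identity : σ_n(c) = -μ c at every play of c
  have hsgμ : ∀ n c, col n = c → sgz θ col n c = -μ c := by
    intro n
    induction n using Nat.strong_induction_on with
    | _ n ih =>
      intro c hcn
      by_cases hf : ∀ i, i < n → col i ≠ c
      · -- n is the first play
        have htn : tt c = n := by
          have h1 : tt c ≤ n := htt3 c n hcn
          rcases Nat.lt_or_ge (tt c) n with h2 | h2
          · exact absurd (htt1 c ⟨n, hcn⟩) (hf (tt c) h2)
          · omega
        show sgz θ col n c = -μ c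
        simp only [μ, htn, sgz, ← Finset.sum_neg_distrib, neg_neg]
      · push_neg at hf
        obtain ⟨i₀, hi₀, hci₀⟩ := hf
        -- previous play
        have hne : ((Finset.range n).filter fun i => col i = c).Nonempty :=
          ⟨i₀, by rw [Finset.mem_filter, Finset.mem_range]; exact ⟨hi₀, hci₀⟩⟩
        set m := (((Finset.range n).filter fun i => col i = c).max' hne) with hm
        have hmmem := Finset.max'_mem _ hne
        rw [Finset.mem_filter, Finset.mem_range] at hmmem
        obtain ⟨hmn, hcm⟩ := hmmem
        have hmax : ∀ j, m < j → j < n → col j ≠ c := by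
          intro j hj1 hj2 hcj
          have : j ≤ m := Finset.le_max' _ j
            (by rw [Finset.mem_filter, Finset.mem_range]; exact ⟨hj2, hcj⟩)
          omega
        have h2 := hconsec c m n hmn hcm hcn hmax
        have h2' : ∑ i ∈ Finset.Ioo m n, θ (col i) c = -2 := by
          have : ∑ i ∈ Finset.Ioo m n, θ (col i) c
              = -∑ i ∈ Finset.Ioo m n, (-θ (col i) c) := by
            rw [← Finset.sum_neg_distrib]; simp
          rw [this, h2]
        rw [sg_split θ col hmn c, h2', hcm, hdiag, ih m hmn c hcm]
        ring
  -- colors played infinitely often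
  have hS'ne : ∃ c : Γ, ∀ N, ∃ n, N ≤ n ∧ col n = c := by
    by_contra h
    push_neg at h
    choose N hN using h
    set M := Finset.univ.sup N with hM
    obtain ⟨n, hn, hcn⟩ := (⟨M, le_refl M, rfl⟩ : ∃ n, M ≤ n ∧ col n = col M)
    exact hN (col M) M (Finset.le_sup (Finset.mem_univ (col M))) rfl
  -- least next play
  have hnext : ∀ c, (∀ N, ∃ n, N ≤ n ∧ col n = c) → ∀ N, ∃ n, N ≤ n ∧ col n = c ∧
      ∀ j, N ≤ j → j < n → col j ≠ c := by
    intro c hc N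
    have hex : ∃ n, N ≤ n ∧ col n = c := hc N
    refine ⟨Nat.find hex, (Nat.find_spec hex).1, (Nat.find_spec hex).2, ?_⟩
    intro j hj1 hj2 hcj
    exact absurd ⟨hj1, hcj⟩ (Nat.find_min hex hj2)
  -- sigma bounds for infinitely-played colors
  have hsglb : ∀ c, (∀ N, ∃ n, N ≤ n ∧ col n = c) → ∀ n, -1 ≤ sgz θ col n c := by
    intro c hc n
    obtain ⟨n', hn'1, hn'2, hn'3⟩ := hnext c hc n
    have key : ∀ k, n ≤ k → k ≤ n' → sgz θ col n' c ≤ sgz θ col k c := by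
      intro k hk1 hk2
      obtain ⟨j, hj⟩ : ∃ j, n' - k = j := ⟨n' - k, rfl⟩
      induction j generalizing k with
      | zero => have : k = n' := by omega
                rw [this]
      | succ i ihj =>
        have hkn' : k < n' := by omega
        have step : sgz θ col (k+1) c ≤ sgz θ col k c := by
          rw [sg_succ]
          have : θ (col k) c ≤ 0 := hoff _ _ (hn'3 k hk1 hkn')
          omega
        have := ihj (k+1) (by omega) (by omega) (by omega)
        omega
    have h1 := key n (le_refl n) hn'1
    have h2 : sgz θ col n' c = -μ c := hsgμ n' c hn'2
    have h3 := hμ1 c ⟨n', hn'2⟩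
    omega
  have hsgub : ∀ c n, sgz θ col n c ≤ 2 := by
    intro c n
    by_cases hf : ∀ i, i < n → col i ≠ c
    · have : sgz θ col n c ≤ 0 := by
        apply Finset.sum_nonpos
        intro i hi
        rw [Finset.mem_range] at hi
        exact hoff _ _ (hf i hi)
      omega
    · push_neg at hf
      obtain ⟨i₀, hi₀, hci₀⟩ := hf
      have hne : ((Finset.range n).filter fun i => col i = c).Nonempty :=
        ⟨i₀, by rw [Finset.mem_filter, Finset.mem_range]; exact ⟨hi₀, hci₀⟩⟩
      obtain ⟨m, hmmem, hmub⟩ := Finset.exists_max_image _ id hne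
      rw [Finset.mem_filter, Finset.mem_range] at hmmem
      obtain ⟨hmn, hcm⟩ := hmmem
      have hmax : ∀ j, m < j → j < n → col j ≠ c := by
        intro j hj1 hj2 hcj
        have : id j ≤ id m := hmub j
          (by rw [Finset.mem_filter, Finset.mem_range]; exact ⟨hj2, hcj⟩)
        simp only [id] at this
        omega
      have htail : ∑ i ∈ Finset.Ioo m n, θ (col i) c ≤ 0 := by
        apply Finset.sum_nonpos
        intro i hi
        rw [Finset.mem_Ioo] at hi
        exact hoff _ _ (hmax i hi.1 hi.2)
      have h2 : sgz θ col m c = -μ c := hsgμ m c hcm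
      have h3 := hμ0 c
      rw [sg_split θ col hmn c, hcm, hdiag]
      omega
  -- choose the infinitely-played color with the earliest first play
  obtain ⟨cex, hcex⟩ := hS'ne
  have hTne : (Finset.univ.filter fun c : Γ => ∀ N, ∃ n, N ≤ n ∧ col n = c).Nonempty :=
    ⟨cex, by rw [Finset.mem_filter]; exact ⟨Finset.mem_univ _, hcex⟩⟩
  obtain ⟨cstar, hcstarT, hcstarmin⟩ := Finset.exists_min_image _ tt hTne
  rw [Finset.mem_filter] at hcstarT
  have hcstarS : ∀ N, ∃ n, N ≤ n ∧ col n = cstar := hcstarT.2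
  have hcstarplayed : ∃ n, col n = cstar := by
    obtain ⟨n, _, hn⟩ := hcstarS 0; exact ⟨n, hn⟩
  -- uniqueness of the earlier neighbor
  have huniq : ∀ c, (∃ n, col n = c) → ∀ g₁ g₂,
      (θ g₁ c ≠ 0 ∧ g₁ ≠ c ∧ ∃ i, i < tt c ∧ col i = g₁) →
      (θ g₂ c ≠ 0 ∧ g₂ ≠ c ∧ ∃ i, i < tt c ∧ col i = g₂) → g₁ = g₂ := by
    intro c hp g₁ g₂ ⟨hθ1, hne1, i₁, hi₁, hci₁⟩ ⟨hθ2, hne2, i₂, hi₂, hci₂⟩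
    by_contra hg
    have hii : i₁ ≠ i₂ := fun h => hg (by rw [← hci₁, ← hci₂, h])
    have hsub : ({i₁, i₂} : Finset ℕ) ⊆ Finset.range (tt c) := by
      intro j hj
      rw [Finset.mem_insert, Finset.mem_singleton] at hj
      rw [Finset.mem_range]
      rcases hj with h | h <;> omega
    have hpair : ∑ i ∈ ({i₁, i₂} : Finset ℕ), (-θ (col i) c)
        ≤ ∑ i ∈ Finset.range (tt c), (-θ (col i) c) := by
      apply Finset.sum_le_sum_of_subset_of_nonneg hsub
      intro i hi _
      rw [Finset.mem_range] at hi
      simp only [neg_nonneg]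
      exact hoff _ _ (htt2 c i hi)
    rw [Finset.sum_pair hii, hci₁, hci₂] at hpair
    have hb1 : θ g₁ c ≤ -1 := by
      have := hoff _ _ hne1; omega
    have hb2 : θ g₂ c ≤ -1 := by
      have := hoff _ _ hne2; omega
    have := hμ1 c hp
    simp only [μ] at this
    omega
  -- the symmetrizer
  set Pr : Γ → Γ → Prop := fun g c => θ g c ≠ 0 ∧ g ≠ c ∧ ∃ i, i < tt c ∧ col i = g
    with hPrdef
  have hPr : ∀ g c, Pr g c → tt g < tt c := by
    rintro g c ⟨-, -, i, hi, hci⟩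
    exact lt_of_le_of_lt (htt3 g i hci) hi
  set dd : Γ → ℚ := symd θ tt Pr hPr with hdd
  have hddpos : ∀ c, 0 < dd c := by
    apply symd_pos
    rintro g c ⟨hθ1, hne, i, hi, hci⟩
    have h1 : θ g c < 0 := lt_of_le_of_ne (hoff _ _ hne) hθ1
    have h2 : θ c g < 0 := by
      have hθ2 : θ c g ≠ 0 := fun h => hθ1 ((hzero g c hne).mpr h)
      exact lt_of_le_of_ne (hoff _ _ (Ne.symm hne)) hθ2
    rw [div_pos_iff]
    right
    constructor <;> [exact_mod_cast h1; exact_mod_cast h2]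
  have haux : ∀ c g, (∃ n, col n = c) → (∃ n, col n = g) → θ c g ≠ 0 → c ≠ g →
      tt g < tt c → dd c * (θ c g : ℚ) = dd g * (θ g c : ℚ) := by
    intro c g hpc hpg hθcg hne httlt
    have hθgc : θ g c ≠ 0 := fun h => hθcg ((hzero c g hne).mpr h)
    have hPrg : Pr g c := ⟨hθgc, Ne.symm hne, tt g, httlt, htt1 g hpg⟩
    have hex : ∃ g', Pr g' c := ⟨g, hPrg⟩
    have hchoose : hex.choose = g := huniq c hpc hex.choose g hex.choose_spec hPrg
    have hunfold : dd c = dd g * ((θ g c : ℚ) / (θ c g : ℚ)) := by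
      rw [hdd]
      conv_lhs => rw [symd]
      rw [dif_pos hex, hchoose]
    rw [hunfold, mul_assoc, div_mul_cancel₀]
    exact Int.cast_ne_zero.mpr hθcg
  have hsymm : ∀ c g, (∃ n, col n = c) → (∃ n, col n = g) →
      dd c * (θ c g : ℚ) = dd g * (θ g c : ℚ) := by
    intro c g hpc hpg
    by_cases hcg : c = g
    · subst hcg; rfl
    · by_cases hθ : θ c g = 0
      · have hθ' : θ g c = 0 := (hzero c g hcg).mp hθ
        rw [hθ, hθ']
        push_cast
        ring
      · have hθ' : θ g c ≠ 0 := fun h => hθ ((hzero c g hcg).mpr h)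
        have httne : tt c ≠ tt g := by
          intro h
          apply hcg
          rw [← htt1 c hpc, ← htt1 g hpg, h]
        rcases Nat.lt_or_ge (tt g) (tt c) with h | h
        · exact haux c g hpc hpg hθ hcg h
        · have h' : tt c < tt g := by omega
          exact (haux g c hpg hpc hθ' (Ne.symm hcg) h').symm
  -- inverse symmetrizer and the bilinear matrix
  set ddi : Γ → ℚ := fun c => (dd c)⁻¹ with hddi
  have hddipos : ∀ c, 0 < ddi c := fun c => inv_pos.mpr (hddpos c)
  set B : Γ → Γ → ℚ := fun a b => (θ a b : ℚ) * ddi b with hB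
  have hBsymm : ∀ a b, (∃ n, col n = a) → (∃ n, col n = b) → B a b = B b a := by
    intro a b hpa hpb
    have h1 := hsymm a b hpa hpb
    have ha : dd a ≠ 0 := ne_of_gt (hddpos a)
    have hb : dd b ≠ 0 := ne_of_gt (hddpos b)
    simp only [B, ddi]
    field_simp
    linear_combination h1
  -- counting function as rationals
  set kk : ℕ → Γ → ℚ := fun n c => (cnt col n c : ℚ) with hkk
  have hkknonneg : ∀ n c, 0 ≤ kk n c := fun n c => Nat.cast_nonneg _
  have hkkmono : ∀ m n c, m ≤ n → kk m c ≤ kk n c := by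
    intro m n c h
    simp only [kk]
    exact_mod_cast cnt_mono col h c
  have hkkplayed : ∀ n c, kk n c ≠ 0 → ∃ i, col i = c := by
    intro n c h
    apply cnt_pos_played col (n := n)
    intro h'
    apply h
    simp only [kk, h', Nat.cast_zero]
  -- the step identity
  have hkksucc : ∀ n, kk (n+1) = fun c => kk n c + (if c = col n then 1 else 0) := by
    intro n
    funext c
    simp only [kk, cnt_succ]
    push_cast
    by_cases h : col n = c
    · rw [if_pos h, if_pos h.symm]
    · rw [if_neg h, if_neg (Ne.symm h)]
  have hQstep : ∀ n, QF B (kk (n+1))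
      = QF B (kk n) + 2 * (1 - (μ (col n) : ℚ)) * ddi (col n) := by
    intro n
    rw [hkksucc n, QF_add, CF_right, CF_left, QF_single]
    have e1 : ∑ a, kk n a * B a (col n) = -(μ (col n) : ℚ) * ddi (col n) := by
      have : ∀ a, kk n a * B a (col n) = ((cnt col n a : ℤ) * θ a (col n) : ℤ) * ddi (col n) := by
        intro a
        simp only [kk, B]
        push_cast
        ring
      rw [Finset.sum_congr rfl (fun a _ => this a), ← Finset.sum_mul]
      have : ∑ a, (((cnt col n a : ℤ) * θ a (col n) : ℤ) : ℚ)
          = ((sgz θ col n (col n) : ℤ) : ℚ) := by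
        rw [sg_as_sum]
        push_cast
        ring
      rw [this, hsgμ n (col n) rfl]
      push_cast
      ring
    have e2 : ∑ b, kk n b * B (col n) b = -(μ (col n) : ℚ) * ddi (col n) := by
      have : ∀ b, kk n b * B (col n) b = kk n b * B b (col n) := by
        intro b
        by_cases hb : kk n b = 0
        · rw [hb, zero_mul, zero_mul]
        · rw [hBsymm (col n) b ⟨n, rfl⟩ (hkkplayed n b hb)]
      rw [Finset.sum_congr rfl (fun b _ => this b)]
      exact e1
    rw [e1, e2]
    have e3 : B (col n) (col n) = 2 * ddi (col n) := by
      simp only [B, hdiag]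
      push_cast
      ring
    rw [e3]
    ring
  -- the linear formula for the energy
  have hQlin : ∀ n, QF B (kk n) = ∑ c, 2 * (1 - (μ c : ℚ)) * kk n c * ddi c := by
    intro n
    induction n with
    | zero =>
      have hk0 : kk 0 = fun _ => 0 := by
        funext c; simp [kk, cnt_zero]
      rw [hk0]
      simp [QF]
    | succ n ih =>
      have expand : ∀ c, 2 * (1 - (μ c : ℚ)) * kk (n+1) c * ddi c
          = 2 * (1 - (μ c : ℚ)) * kk n c * ddi c
            + (if c = col n then 2 * (1 - (μ c : ℚ)) * ddi c else 0) := by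
        intro c
        simp only [hkksucc n]
        by_cases h : c = col n
        · rw [if_pos h, if_pos h]; ring
        · rw [if_neg h, if_neg h]; ring
      rw [hQstep n, ih,
        Finset.sum_congr rfl (fun c _ => expand c), Finset.sum_add_distrib,
        Finset.sum_ite_eq' Finset.univ (col n) (fun c => 2 * (1 - (μ c : ℚ)) * ddi c),
        if_pos (Finset.mem_univ _)]
  -- nonnegativity of the linear energy terms
  have hterm_nonneg : ∀ n c, 0 ≤ 2 * (1 - (μ c : ℚ)) * kk n c * ddi c := by
    intro n c
    by_cases hp : ∃ i, col i = c
    · have h1 : (μ c : ℚ) ≤ 1 := by exact_mod_cast hμ1 c hp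
      have h2 := hkknonneg n c
      have h3 := le_of_lt (hddipos c)
      have h4 : (0:ℚ) ≤ 1 - (μ c : ℚ) := by linarith
      have := mul_nonneg (mul_nonneg (mul_nonneg (by norm_num : (0:ℚ) ≤ 2) h4) h2) h3
      exact this
    · push_neg at hp
      have : kk n c = 0 := by
        simp only [kk, cnt_unplayed col hp n, Nat.cast_zero]
      rw [this]
      ring_nf
      exact le_refl 0
  have hQnonneg : ∀ n, 0 ≤ QF B (kk n) := by
    intro n
    rw [hQlin n]
    exact Finset.sum_nonneg fun c _ => hterm_nonneg n c
  have hQge : ∀ n c', 2 * (1 - (μ c' : ℚ)) * kk n c' * ddi c' ≤ QF B (kk n) := by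
    intro n c'
    rw [hQlin n]
    exact Finset.single_le_sum (fun c _ => hterm_nonneg n c) (Finset.mem_univ c')
  -- kk at cstar is unbounded
  have hkkunb : ∀ M : ℚ, ∃ n, M ≤ kk n cstar := by
    have hnat : ∀ m : ℕ, ∃ n, m ≤ cnt col n cstar := by
      intro m
      induction m with
      | zero => exact ⟨0, Nat.zero_le _⟩
      | succ k ih =>
        obtain ⟨n, hn⟩ := ih
        obtain ⟨n', hn'1, hn'2⟩ := hcstarS n
        refine ⟨n' + 1, ?_⟩
        have h1 := cnt_play col hn'2
        have h2 := cnt_mono col hn'1 cstar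
        omega
    intro M
    obtain ⟨n, hn⟩ := hnat ⌈M⌉₊
    refine ⟨n, le_trans (Nat.le_ceil M) ?_⟩
    simp only [kk]
    exact_mod_cast hn
  -- stabilization of finitely-played colors
  set SP : Γ → Prop := fun c => ∀ N, ∃ n, N ≤ n ∧ col n = c with hSPdef
  have hSPplayed : ∀ c, SP c → ∃ i, col i = c := by
    intro c hc
    obtain ⟨n, -, hn⟩ := hc 0
    exact ⟨n, hn⟩
  have hstops : ∀ c, ∃ N, ¬ SP c → ∀ n, N ≤ n → col n ≠ c := by
    intro c
    by_cases h : SP c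
    · exact ⟨0, fun h' => absurd h h'⟩
    · have h' := h
      simp only [SP] at h'
      push_neg at h'
      obtain ⟨N, hN⟩ := h'
      exact ⟨N, fun _ n hn hc => (hN n hn) hc⟩
  choose Nstop hNstop using hstops
  set N₀ := Finset.univ.sup Nstop with hN₀
  have hcntbd : ∀ c, ¬ SP c → ∀ n, cnt col n c ≤ cnt col N₀ c := by
    intro c hc n
    rcases le_or_gt n N₀ with h | h
    · exact cnt_mono col h c
    · have heq := cnt_stable col (N := N₀)
        (fun j hj => hNstop c hc j (le_trans (Finset.le_sup (Finset.mem_univ c)) hj))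
        n (le_of_lt h)
      omega
  set KB : ℚ := ∑ c, kk N₀ c with hKBdef
  have hKBnn : 0 ≤ KB := Finset.sum_nonneg fun c _ => hkknonneg N₀ c
  have hKB : ∀ n c, ¬ SP c → kk n c ≤ KB := by
    intro n c hc
    have h1 : kk n c ≤ kk N₀ c := by
      simp only [kk]
      exact_mod_cast hcntbd c hc n
    exact le_trans h1 (Finset.single_le_sum (fun c _ => hkknonneg N₀ c) (Finset.mem_univ c))
  set Θq : ℚ := ∑ a, ∑ b, |(θ a b : ℚ)| with hΘdef
  have hΘnn : 0 ≤ Θq :=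
    Finset.sum_nonneg fun a _ => Finset.sum_nonneg fun b _ => abs_nonneg _
  have hΘrow : ∀ b, ∑ a, |(θ a b : ℚ)| ≤ Θq := by
    intro b
    apply Finset.sum_le_sum
    intro a _
    exact Finset.single_le_sum (f := fun b' => |(θ a b' : ℚ)|)
      (fun b' _ => abs_nonneg _) (Finset.mem_univ b)
  set DD : ℚ := ∑ c, ddi c with hDDdef
  have hDDi : ∀ c, ddi c ≤ DD :=
    fun c => Finset.single_le_sum (fun c' _ => le_of_lt (hddipos c')) (Finset.mem_univ c)
  have hDDnn : 0 ≤ DD := Finset.sum_nonneg fun c _ => le_of_lt (hddipos c)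
  -- the S'-part of the census vector, as integers
  set wz : ℕ → Γ → ℤ := fun n c => if SP c then
      sgz θ col n c - ∑ d ∈ Finset.univ.filter (fun d => ¬ SP d), (cnt col n d : ℤ) * θ d c
    else 0 with hwzdef
  have hwzval : ∀ n c, SP c →
      wz n c = ∑ d ∈ Finset.univ.filter (fun d => SP d), (cnt col n d : ℤ) * θ d c := by
    intro n c hc
    simp only [wz, if_pos hc]
    rw [sg_as_sum]
    rw [← Finset.sum_filter_add_sum_filter_not Finset.univ (fun d => SP d)
      (fun d => (cnt col n d : ℤ) * θ d c)]
    ring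
  set CZ : ℤ := 2 + (∑ d, (cnt col N₀ d : ℤ)) * (∑ a, ∑ b, |θ a b|) with hCZdef
  have hTbd : ∀ n c, |∑ d ∈ Finset.univ.filter (fun d => ¬ SP d), (cnt col n d : ℤ) * θ d c|
      ≤ (∑ d, (cnt col N₀ d : ℤ)) * (∑ a, ∑ b, |θ a b|) := by
    intro n c
    calc |∑ d ∈ Finset.univ.filter (fun d => ¬ SP d), (cnt col n d : ℤ) * θ d c|
        ≤ ∑ d ∈ Finset.univ.filter (fun d => ¬ SP d), |(cnt col n d : ℤ) * θ d c| :=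
          Finset.abs_sum_le_sum_abs _ _
      _ ≤ ∑ d ∈ Finset.univ.filter (fun d => ¬ SP d),
            (cnt col N₀ d : ℤ) * (∑ a, ∑ b, |θ a b|) := by
          apply Finset.sum_le_sum
          intro d hd
          rw [Finset.mem_filter] at hd
          rw [abs_mul]
          apply mul_le_mul
          · rw [abs_of_nonneg (by positivity : (0:ℤ) ≤ (cnt col n d : ℤ))]
            exact_mod_cast hcntbd d hd.2 n
          · calc |θ d c| ≤ ∑ b, |θ d b| :=
                  Finset.single_le_sum (f := fun b => |θ d b|)
                    (fun b _ => abs_nonneg _) (Finset.mem_univ c)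
              _ ≤ ∑ a, ∑ b, |θ a b| :=
                  Finset.single_le_sum (f := fun a => ∑ b, |θ a b|)
                    (fun a _ => Finset.sum_nonneg fun b _ => abs_nonneg _) (Finset.mem_univ d)
          · exact abs_nonneg _
          · positivity
      _ ≤ ∑ d, (cnt col N₀ d : ℤ) * (∑ a, ∑ b, |θ a b|) := by
          apply Finset.sum_le_sum_of_subset_of_nonneg (Finset.filter_subset _ _)
          intro d _ _
          positivity
      _ = (∑ d, (cnt col N₀ d : ℤ)) * (∑ a, ∑ b, |θ a b|) := by
          rw [Finset.sum_mul]
  have hwzbd : ∀ n c, -CZ ≤ wz n c ∧ wz n c ≤ CZ := by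
    intro n c
    have hCZnn : (0:ℤ) ≤ (∑ d, (cnt col N₀ d : ℤ)) * (∑ a, ∑ b, |θ a b|) := by positivity
    by_cases hc : SP c
    · have h1 := hsglb c hc n
      have h2 := hsgub c n
      have h3 := hTbd n c
      have h4 := abs_le.mp h3
      simp only [wz, if_pos hc, CZ]
      omega
    · simp only [wz, if_neg hc, CZ]
      omega
  set WS : Finset (Γ → ℤ) := Fintype.piFinset (fun _ => Finset.Icc (-CZ) CZ) with hWSdef
  have hwzWS : ∀ n, wz n ∈ WS := by
    intro n
    rw [hWSdef, Fintype.mem_piFinset]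
    intro c
    rw [Finset.mem_Icc]
    exact hwzbd n c
  set rep : (Γ → ℤ) → ℕ := fun v => if h : ∃ m, wz m = v then h.choose else 0 with hrepdef
  have hrepeq : ∀ n, wz (rep (wz n)) = wz n := by
    intro n
    have h : ∃ m, wz m = wz n := ⟨n, rfl⟩
    simp only [rep, dif_pos h]
    exact h.choose_spec
  set rr : ℕ → Γ → ℚ := fun n c => if SP c then kk (rep (wz n)) c else 0 with hrrdef
  set kf : ℕ → Γ → ℚ := fun n c => if SP c then 0 else kk n c with hkfdef
  set uu : ℕ → Γ → ℚ := fun n c => (if SP c then kk n c else 0) - rr n c with huudef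
  set CR : ℚ := ∑ v ∈ WS, ∑ c, kk (rep v) c with hCRdef
  have hCRnn : 0 ≤ CR :=
    Finset.sum_nonneg fun v _ => Finset.sum_nonneg fun c _ => hkknonneg _ c
  have hrbd : ∀ n c, 0 ≤ rr n c ∧ rr n c ≤ CR := by
    intro n c
    by_cases hc : SP c
    · simp only [rr, if_pos hc]
      refine ⟨hkknonneg _ c, ?_⟩
      calc kk (rep (wz n)) c ≤ ∑ c', kk (rep (wz n)) c' :=
            Finset.single_le_sum (fun c' _ => hkknonneg _ c') (Finset.mem_univ c)
        _ ≤ CR := Finset.single_le_sum (f := fun v => ∑ c', kk (rep v) c')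
            (fun v _ => Finset.sum_nonneg fun c' _ => hkknonneg _ c') (hwzWS n)
    · simp only [rr, if_neg hc]
      exact ⟨le_refl 0, hCRnn⟩
  have husupp : ∀ n c, ¬ SP c → uu n c = 0 := by
    intro n c hc
    simp only [uu, rr, if_neg hc]
    ring
  have hulb : ∀ n c, -CR ≤ uu n c := by
    intro n c
    by_cases hc : SP c
    · simp only [uu, rr, if_pos hc]
      have := hkknonneg n c
      have := (hrbd n c).2
      simp only [rr, if_pos hc] at this
      linarith
    · rw [husupp n c hc]
      linarith [hCRnn]
  have hulb2 : ∀ n c, SP c → kk n c - CR ≤ uu n c := by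
    intro n c hc
    simp only [uu, rr, if_pos hc]
    have := (hrbd n c).2
    simp only [rr, if_pos hc] at this
    linarith
  have huplayed : ∀ n c, uu n c ≠ 0 → ∃ i, col i = c := by
    intro n c h
    by_cases hc : SP c
    · exact hSPplayed c hc
    · exact absurd (husupp n c hc) h
  -- kernel property
  have hL : ∀ m b, SP b →
      ∑ a, (if SP a then kk m a else 0) * (θ a b : ℚ) = ((wz m b : ℤ) : ℚ) := by
    intro m b hb
    rw [hwzval m b hb]
    push_cast
    rw [Finset.sum_filter]
    refine Finset.sum_congr rfl fun a _ => ?_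
    by_cases ha : SP a
    · rw [if_pos ha, if_pos ha]
    · rw [if_neg ha, if_neg ha]
      ring
  have hker : ∀ n b, SP b → ∑ a, uu n a * (θ a b : ℚ) = 0 := by
    intro n b hb
    have hexp : ∀ a, uu n a * (θ a b : ℚ)
        = (if SP a then kk n a else 0) * (θ a b : ℚ)
          - (if SP a then kk (rep (wz n)) a else 0) * (θ a b : ℚ) := by
      intro a
      simp only [uu, rr]
      ring
    rw [Finset.sum_congr rfl (fun a _ => hexp a), Finset.sum_sub_distrib,
      hL n b hb, hL (rep (wz n)) b hb, hrepeq n]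
    ring
  set vv : ℕ → Γ → ℚ := fun n c => rr n c + kf n c with hvvdef
  have hkdecomp : ∀ n, kk n = fun c => uu n c + vv n c := by
    intro n; funext c
    simp only [uu, vv, rr, kf]
    by_cases hc : SP c
    · simp only [if_pos hc]; ring
    · simp only [if_neg hc]; ring
  have hvbd : ∀ n c, 0 ≤ vv n c ∧ vv n c ≤ CR + KB := by
    intro n c
    by_cases hc : SP c
    · simp only [vv, kf, if_pos hc, add_zero]
      have := hrbd n c
      constructor
      · exact this.1
      · linarith [hKBnn]
    · simp only [vv, rr, kf, if_neg hc, zero_add]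
      constructor
      · exact hkknonneg n c
      · linarith [hKB n c hc, hCRnn]
  -- QF(u) = 0
  have hQFu : ∀ n, QF B (uu n) = 0 := by
    intro n
    unfold QF
    rw [Finset.sum_comm]
    apply Finset.sum_eq_zero
    intro b _
    have hfac : ∀ a, uu n a * uu n b * B a b
        = (uu n b * ddi b) * (uu n a * (θ a b : ℚ)) := by
      intro a; simp only [hB]; ring
    rw [Finset.sum_congr rfl (fun a _ => hfac a), ← Finset.mul_sum]
    by_cases hb : SP b
    · rw [hker n b hb, mul_zero]
    · rw [husupp n b hb]; ring
  -- CF(u, r) = 0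
  have hCFur : ∀ n, CF B (uu n) (rr n) = 0 := by
    intro n
    unfold CF
    rw [Finset.sum_comm]
    apply Finset.sum_eq_zero
    intro b _
    have hfac : ∀ a, uu n a * rr n b * B a b
        = (rr n b * ddi b) * (uu n a * (θ a b : ℚ)) := by
      intro a; simp only [hB]; ring
    rw [Finset.sum_congr rfl (fun a _ => hfac a), ← Finset.mul_sum]
    by_cases hb : SP b
    · rw [hker n b hb, mul_zero]
    · have h0 : rr n b = 0 := by simp only [rr, if_neg hb]
      rw [h0]; ring
  -- CF(r, u) = 0
  have hCFru : ∀ n, CF B (rr n) (uu n) = 0 := by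
    intro n
    unfold CF
    have hflip : ∀ a b, rr n a * uu n b * B a b
        = (rr n a * ddi a) * (uu n b * (θ b a : ℚ)) := by
      intro a b
      by_cases ha : rr n a = 0
      · rw [ha]; ring
      · by_cases hb : uu n b = 0
        · rw [hb]; ring
        · have hpa : ∃ i, col i = a := by
            by_cases hSa : SP a
            · exact hSPplayed a hSa
            · exact absurd (by simp only [rr, if_neg hSa] : rr n a = 0) ha
          have hpb := huplayed n b hb
          rw [hBsymm a b hpa hpb]
          simp only [hB]
          ring
    rw [Finset.sum_congr rfl (fun a _ => Finset.sum_congr rfl (fun b _ => hflip a b))]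
    apply Finset.sum_eq_zero
    intro a _
    rw [← Finset.mul_sum]
    by_cases ha : SP a
    · rw [hker n a ha, mul_zero]
    · have h0 : rr n a = 0 := by simp only [rr, if_neg ha]
      rw [h0]; ring
  -- bound on the inner sums against non-recurrent colors
  have hterm2 : ∀ n y x, ¬ SP y → uu n x * (θ x y : ℚ) ≤ CR * |(θ x y : ℚ)| := by
    intro n y x hy
    by_cases hx : SP x
    · have hxy : x ≠ y := fun h => hy (h ▸ hx)
      have hθ : (θ x y : ℚ) ≤ 0 := by exact_mod_cast hoff x y hxy
      have h1 : -CR ≤ uu n x := hulb n x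
      have h2 : uu n x * (θ x y : ℚ) ≤ (-CR) * (θ x y : ℚ) :=
        mul_le_mul_of_nonpos_right h1 hθ
      rw [abs_of_nonpos hθ]
      linarith
    · rw [husupp n x hx, zero_mul]
      exact mul_nonneg hCRnn (abs_nonneg _)
  have hinner_le : ∀ n y, ¬ SP y → ∑ x, uu n x * (θ x y : ℚ) ≤ CR * Θq := by
    intro n y hy
    calc ∑ x, uu n x * (θ x y : ℚ) ≤ ∑ x, CR * |(θ x y : ℚ)| :=
          Finset.sum_le_sum fun x _ => hterm2 n y x hy
      _ = CR * ∑ x, |(θ x y : ℚ)| := by rw [Finset.mul_sum]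
      _ ≤ CR * Θq := mul_le_mul_of_nonneg_left (hΘrow y) hCRnn
  -- CF(u, kf) bound
  have hfacB : ∀ n b, ∑ a, uu n a * kf n b * B a b
      = (kf n b * ddi b) * ∑ a, uu n a * (θ a b : ℚ) := by
    intro n b
    rw [Finset.mul_sum]
    refine Finset.sum_congr rfl fun a _ => ?_
    simp only [hB]
    ring
  have htermB : ∀ n b, (kf n b * ddi b) * (∑ a, uu n a * (θ a b : ℚ))
      ≤ KB * (CR * Θq) * ddi b := by
    intro n b
    by_cases hb : SP b
    · have h0 : kf n b = 0 := by simp only [kf, if_pos hb]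
      rw [h0, zero_mul, zero_mul]
      have : (0:ℚ) ≤ KB * (CR * Θq) * ddi b :=
        mul_nonneg (mul_nonneg hKBnn (mul_nonneg hCRnn hΘnn)) (le_of_lt (hddipos b))
      linarith
    · have h1 := hinner_le n b hb
      have h2 : kf n b ≤ KB := by
        simp only [kf, if_neg hb]; exact hKB n b hb
      have h3 : 0 ≤ kf n b := by
        simp only [kf, if_neg hb]; exact hkknonneg n b
      calc (kf n b * ddi b) * ∑ a, uu n a * (θ a b : ℚ)
          ≤ (kf n b * ddi b) * (CR * Θq) :=
            mul_le_mul_of_nonneg_left h1 (mul_nonneg h3 (le_of_lt (hddipos b)))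
        _ ≤ (KB * ddi b) * (CR * Θq) :=
            mul_le_mul_of_nonneg_right
              (mul_le_mul_of_nonneg_right h2 (le_of_lt (hddipos b)))
              (mul_nonneg hCRnn hΘnn)
        _ = KB * (CR * Θq) * ddi b := by ring
  have hCFukf : ∀ n, CF B (uu n) (kf n) ≤ KB * (CR * Θq) * DD := by
    intro n
    unfold CF
    rw [Finset.sum_comm]
    rw [Finset.sum_congr rfl (fun b _ => hfacB n b)]
    calc ∑ b, (kf n b * ddi b) * ∑ a, uu n a * (θ a b : ℚ)
        ≤ ∑ b, KB * (CR * Θq) * ddi b :=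
          Finset.sum_le_sum fun b _ => htermB n b
      _ = KB * (CR * Θq) * DD := by
          rw [← Finset.mul_sum, ← hDDdef]
  -- CF(kf, u) bound
  have hCFkfu : ∀ n, CF B (kf n) (uu n) ≤ KB * (CR * Θq) * DD := by
    intro n
    unfold CF
    have hflip : ∀ a b, kf n a * uu n b * B a b
        = (kf n a * ddi a) * (uu n b * (θ b a : ℚ)) := by
      intro a b
      by_cases ha : kf n a = 0
      · rw [ha]; ring
      · by_cases hb : uu n b = 0
        · rw [hb]; ring
        · have hnSa : ¬ SP a := by
            intro hSa
            exact ha (by simp only [kf, if_pos hSa])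
          have hpa : ∃ i, col i = a := by
            apply hkkplayed n a
            intro hk
            exact ha (by simp only [kf, if_neg hnSa, hk])
          have hpb := huplayed n b hb
          rw [hBsymm a b hpa hpb]
          simp only [hB]
          ring
    rw [Finset.sum_congr rfl (fun a _ => Finset.sum_congr rfl (fun b _ => hflip a b))]
    calc ∑ a, ∑ b, (kf n a * ddi a) * (uu n b * (θ b a : ℚ))
        ≤ ∑ a, KB * (CR * Θq) * ddi a := by
          apply Finset.sum_le_sum
          intro a _
          rw [← Finset.mul_sum]
          by_cases ha : SP a
          · have h0 : kf n a = 0 := by simp only [kf, if_pos ha]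
            rw [h0, zero_mul, zero_mul]
            have : (0:ℚ) ≤ KB * (CR * Θq) * ddi a :=
              mul_nonneg (mul_nonneg hKBnn (mul_nonneg hCRnn hΘnn)) (le_of_lt (hddipos a))
            linarith
          · have h1 : ∑ b, uu n b * (θ b a : ℚ) ≤ CR * Θq := hinner_le n a ha
            have h2 : kf n a ≤ KB := by
              simp only [kf, if_neg ha]; exact hKB n a ha
            have h3 : 0 ≤ kf n a := by
              simp only [kf, if_neg ha]; exact hkknonneg n a
            calc (kf n a * ddi a) * ∑ b, uu n b * (θ b a : ℚ)
                ≤ (kf n a * ddi a) * (CR * Θq) :=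
                  mul_le_mul_of_nonneg_left h1 (mul_nonneg h3 (le_of_lt (hddipos a)))
              _ ≤ (KB * ddi a) * (CR * Θq) :=
                  mul_le_mul_of_nonneg_right
                    (mul_le_mul_of_nonneg_right h2 (le_of_lt (hddipos a)))
                    (mul_nonneg hCRnn hΘnn)
              _ = KB * (CR * Θq) * ddi a := by ring
      _ = KB * (CR * Θq) * DD := by
          rw [← Finset.mul_sum, ← hDDdef]
  -- QF(v) bound
  have hQFv : ∀ n, QF B (vv n) ≤ (CR + KB) * (CR + KB) * DD * Θq := by
    intro n
    unfold QF
    calc ∑ a, ∑ b, vv n a * vv n b * B a b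
        ≤ ∑ a, ∑ b, (CR + KB) * (CR + KB) * DD * |(θ a b : ℚ)| := by
          apply Finset.sum_le_sum
          intro a _
          apply Finset.sum_le_sum
          intro b _
          have hva := hvbd n a
          have hvb := hvbd n b
          have hBb : B a b ≤ |(θ a b : ℚ)| * DD := by
            simp only [hB]
            calc (θ a b : ℚ) * ddi b ≤ |(θ a b : ℚ)| * ddi b :=
                  mul_le_mul_of_nonneg_right (le_abs_self _) (le_of_lt (hddipos b))
              _ ≤ |(θ a b : ℚ)| * DD :=
                  mul_le_mul_of_nonneg_left (hDDi b) (abs_nonneg _)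
          calc vv n a * vv n b * B a b
              ≤ vv n a * vv n b * (|(θ a b : ℚ)| * DD) :=
                mul_le_mul_of_nonneg_left hBb (mul_nonneg hva.1 hvb.1)
            _ ≤ (CR + KB) * (CR + KB) * (|(θ a b : ℚ)| * DD) :=
                mul_le_mul_of_nonneg_right
                  (mul_le_mul hva.2 hvb.2 hvb.1 (by linarith [hCRnn, hKBnn]))
                  (mul_nonneg (abs_nonneg _) hDDnn)
            _ = (CR + KB) * (CR + KB) * DD * |(θ a b : ℚ)| := by ring
      _ = (CR + KB) * (CR + KB) * DD * Θq := by
          rw [Finset.sum_congr rfl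
            (fun a _ => (Finset.mul_sum Finset.univ
              (fun b => |(θ a b : ℚ)|) ((CR + KB) * (CR + KB) * DD)).symm),
            ← Finset.mul_sum, ← hΘdef]
  -- energy decomposition
  have hQdecomp : ∀ n, QF B (kk n)
      = CF B (uu n) (kf n) + CF B (kf n) (uu n) + QF B (vv n) := by
    intro n
    have h0 : QF B (kk n) = QF B (fun c => uu n c + vv n c) := by
      rw [← hkdecomp n]
    have hv : vv n = fun c => rr n c + kf n c := rfl
    rw [h0, QF_add, hQFu n]
    have h1 : CF B (uu n) (vv n) = CF B (uu n) (kf n) := by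
      rw [hv, CF_add_right, hCFur n, zero_add]
    have h2 : CF B (vv n) (uu n) = CF B (kf n) (uu n) := by
      rw [hv, CF_add_left, hCFru n, zero_add]
    rw [h1, h2]
    ring
  -- the two cases
  by_cases hcase : ∀ i, i < tt cstar → θ (col i) cstar = 0
  · -- case A : μ cstar = 0, energy grows without bound
    have hμc : μ cstar = 0 := by
      simp only [μ]
      apply Finset.sum_eq_zero
      intro i hi
      rw [Finset.mem_range] at hi
      rw [hcase i hi]
      ring
    set CA : ℚ := KB * (CR * Θq) * DD + KB * (CR * Θq) * DD
      + (CR + KB) * (CR + KB) * DD * Θq with hCAdef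
    have hub : ∀ n, QF B (kk n) ≤ CA := by
      intro n
      rw [hQdecomp n, hCAdef]
      have := hCFukf n
      have := hCFkfu n
      have := hQFv n
      linarith
    have hdpos : (0:ℚ) < 2 * ddi cstar := by
      have := hddipos cstar
      linarith
    obtain ⟨n, hn⟩ := hkkunb ((CA + 1) / (2 * ddi cstar))
    rw [div_le_iff₀ hdpos] at hn
    have h1 := hQge n cstar
    rw [hμc] at h1
    have h2 := hub n
    push_cast at h1
    nlinarith [h1, h2, hn]
  · -- case B : an earlier neighbor g of cstar exists and is finitely played
    push_neg at hcase
    obtain ⟨ig, hig, hθig⟩ := hcase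
    have hgne : col ig ≠ cstar := htt2 cstar ig hig
    have hθg1 : θ cstar (col ig) ≤ -1 := by
      have h2 : θ cstar (col ig) ≠ 0 := fun h => hθig ((hzero cstar (col ig) (Ne.symm hgne)).mp h)
      have h3 : θ cstar (col ig) ≤ 0 := hoff _ _ (Ne.symm hgne)
      omega
    have hgnotS : ¬ SP (col ig) := by
      intro hSg
      have h1 : tt cstar ≤ tt (col ig) := by
        apply hcstarmin
        rw [Finset.mem_filter]
        exact ⟨Finset.mem_univ _, hSg⟩
      have h2 : tt (col ig) ≤ ig := htt3 (col ig) ig rfl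
      omega
    -- refined bound on CF(u, kf) for large n
    have hCFukfB : ∀ n, ig < n → CR * Θq + CR ≤ kk n cstar →
        CF B (uu n) (kf n) ≤ KB * (CR * Θq) * DD
          + ddi (col ig) * (CR * Θq + CR - kk n cstar) := by
      intro n hn hbig
      unfold CF
      rw [Finset.sum_comm]
      rw [Finset.sum_congr rfl (fun b _ => hfacB n b)]
      rw [← Finset.add_sum_erase Finset.univ _ (Finset.mem_univ (col ig))]
      have hrest : ∑ b ∈ Finset.univ.erase (col ig),
          (kf n b * ddi b) * ∑ a, uu n a * (θ a b : ℚ) ≤ KB * (CR * Θq) * DD := by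
        calc ∑ b ∈ Finset.univ.erase (col ig),
            (kf n b * ddi b) * ∑ a, uu n a * (θ a b : ℚ)
            ≤ ∑ b ∈ Finset.univ.erase (col ig), KB * (CR * Θq) * ddi b :=
              Finset.sum_le_sum fun b _ => htermB n b
          _ ≤ ∑ b, KB * (CR * Θq) * ddi b := by
              apply Finset.sum_le_sum_of_subset_of_nonneg (Finset.erase_subset _ _)
              intro b _ _
              exact mul_nonneg (mul_nonneg hKBnn (mul_nonneg hCRnn hΘnn))
                (le_of_lt (hddipos b))
          _ = KB * (CR * Θq) * DD := by rw [← Finset.mul_sum, ← hDDdef]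
      have hkfg : 1 ≤ kf n (col ig) := by
        simp only [kf, if_neg hgnotS]
        have h1 : 1 ≤ cnt col (ig + 1) (col ig) := by
          have := cnt_play col (n := ig) (c := col ig) rfl
          omega
        have h2 : cnt col (ig + 1) (col ig) ≤ cnt col n (col ig) :=
          cnt_mono col hn (col ig)
        simp only [kk]
        exact_mod_cast le_trans h1 h2
      have hinnerg : ∑ a, uu n a * (θ a (col ig) : ℚ)
          ≤ CR * Θq + (CR - kk n cstar) := by
        rw [← Finset.add_sum_erase Finset.univ _ (Finset.mem_univ cstar)]
        have hfirstterm : uu n cstar * (θ cstar (col ig) : ℚ) ≤ CR - kk n cstar := by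
          have hu0 : 0 ≤ uu n cstar := by
            have := hulb2 n cstar hcstarT.2
            have hΘCR : 0 ≤ CR * Θq := mul_nonneg hCRnn hΘnn
            linarith
          have hθq : (θ cstar (col ig) : ℚ) ≤ -1 := by exact_mod_cast hθg1
          have h1 : uu n cstar * (θ cstar (col ig) : ℚ) ≤ uu n cstar * (-1) :=
            mul_le_mul_of_nonneg_left hθq hu0
          have h2 := hulb2 n cstar hcstarT.2
          linarith
        have hresta : ∑ a ∈ Finset.univ.erase cstar, uu n a * (θ a (col ig) : ℚ)
            ≤ CR * Θq := by
          calc ∑ a ∈ Finset.univ.erase cstar, uu n a * (θ a (col ig) : ℚ)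
              ≤ ∑ a ∈ Finset.univ.erase cstar, CR * |(θ a (col ig) : ℚ)| :=
                Finset.sum_le_sum fun a _ => hterm2 n (col ig) a hgnotS
            _ ≤ ∑ a, CR * |(θ a (col ig) : ℚ)| := by
                apply Finset.sum_le_sum_of_subset_of_nonneg (Finset.erase_subset _ _)
                intro a _ _
                exact mul_nonneg hCRnn (abs_nonneg _)
            _ = CR * ∑ a, |(θ a (col ig) : ℚ)| := by rw [Finset.mul_sum]
            _ ≤ CR * Θq := mul_le_mul_of_nonneg_left (hΘrow (col ig)) hCRnn
        linarith
      have hinnerg_np : ∑ a, uu n a * (θ a (col ig) : ℚ) ≤ 0 := by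
        linarith
      have hgterm : (kf n (col ig) * ddi (col ig)) * ∑ a, uu n a * (θ a (col ig) : ℚ)
          ≤ ddi (col ig) * (CR * Θq + CR - kk n cstar) := by
        have hstep1 : (kf n (col ig) * ddi (col ig)) * ∑ a, uu n a * (θ a (col ig) : ℚ)
            ≤ (1 * ddi (col ig)) * ∑ a, uu n a * (θ a (col ig) : ℚ) := by
          apply mul_le_mul_of_nonpos_right _ hinnerg_np
          exact mul_le_mul_of_nonneg_right hkfg (le_of_lt (hddipos _))
        have hstep2 : (1 * ddi (col ig)) * ∑ a, uu n a * (θ a (col ig) : ℚ)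
            ≤ ddi (col ig) * (CR * Θq + (CR - kk n cstar)) := by
          rw [one_mul]
          exact mul_le_mul_of_nonneg_left hinnerg (le_of_lt (hddipos _))
        have : CR * Θq + (CR - kk n cstar) = CR * Θq + CR - kk n cstar := by ring
        linarith
      linarith
    -- choose n large enough for the contradiction
    set CB : ℚ := KB * (CR * Θq) * DD + KB * (CR * Θq) * DD
      + (CR + KB) * (CR + KB) * DD * Θq with hCBdef
    have hddig := hddipos (col ig)
    obtain ⟨n', hn'⟩ := hkkunb (CR * Θq + CR + (CB + 1) / ddi (col ig))
    set n := max n' (ig + 1) with hndef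
    have hkkn : CR * Θq + CR + (CB + 1) / ddi (col ig) ≤ kk n cstar :=
      le_trans hn' (hkkmono n' n cstar (le_max_left _ _))
    have hign : ig < n := lt_of_lt_of_le (Nat.lt_succ_self ig) (le_max_right _ _)
    have hdivpos : 0 < (CB + 1) / ddi (col ig) := by
      apply div_pos _ hddig
      have h1 : (0:ℚ) ≤ KB * (CR * Θq) * DD :=
        mul_nonneg (mul_nonneg hKBnn (mul_nonneg hCRnn hΘnn)) hDDnn
      have h2 : (0:ℚ) ≤ (CR + KB) * (CR + KB) * DD * Θq :=
        mul_nonneg (mul_nonneg (mul_nonneg (by linarith) (by linarith)) hDDnn) hΘnn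
      rw [hCBdef]
      linarith
    have hbig : CR * Θq + CR ≤ kk n cstar := by linarith
    have hB1 := hCFukfB n hign hbig
    have hB2 := hCFkfu n
    have hB3 := hQFv n
    have hB4 := hQnonneg n
    rw [hQdecomp n] at hB4
    -- ddi g * (CR * Θq + CR - kk n cstar) ≤ -(CB+1)
    have hkey : ddi (col ig) * (CR * Θq + CR - kk n cstar) ≤ -(CB + 1) := by
      have h1 : CR * Θq + CR - kk n cstar ≤ -((CB + 1) / ddi (col ig)) := by
        linarith
      have h2 : ddi (col ig) * (CR * Θq + CR - kk n cstar)
          ≤ ddi (col ig) * (-((CB + 1) / ddi (col ig))) :=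
        mul_le_mul_of_nonneg_left h1 (le_of_lt hddig)
      have h3 : ddi (col ig) * (-((CB + 1) / ddi (col ig))) = -(CB + 1) := by
        field_simp
      linarith
    rw [hCBdef] at hkey
    linarith


end WithDecEq

end Statement9Aux

/-- a Γ-colored d-complete poset all of whose color sets are
bounded above is finite. -/
theorem statement9 (D : DynkinDiagram Γ) (κ : P → Γ) (hsurj : Function.Surjective κ)
    (hdc : DComplete D κ) (hbdd : ∀ b : Γ, ColorBddAbove κ b) :
    Finite P := by
  classical
  by_contra hfin
  have hinf : Infinite P := not_finite_iff_infinite.mp hfin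
  obtain ⟨hEC, hNA, hAC, hICE, hUCB⟩ := hdc
  obtain ⟨c₀, hc₀⟩ := exists_infinite_fiber κ hinf
  obtain ⟨y, hy1, hy2⟩ := exists_descending κ hEC hc₀ (hbdd c₀)
  have hupfin := filter_finite κ hEC hsurj hbdd
  obtain ⟨f, hinj, hLE⟩ := exists_reading y hy2 hupfin
  exact no_infinite_word D.θ D.diag D.offdiag_nonpos D.zero_iff (fun n => κ (f n))
    (fun c t hc hf => (word_first D κ f hinj hLE hEC hAC hUCB c t hc hf).2)
    (fun c m n hmn hcm hcn hb =>
      word_consec D κ f hinj hLE hEC hAC hICE c m n hmn hcm hcn hb)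

end GCP
end

section
/- Let k ≥ 1 and let P be a connected Γ-colored poset that satisfies EC, NA, AC, and UCBk. Then either for every color b the set P_b is bounded above in P, or for every color b the set P_b is unbounded above in P. -/
namespace GCP

variable {Γ : Type*} [Fintype Γ] {P : Type*} [PartialOrder P] [LocallyFiniteOrder P]

/-! ### Auxiliary lemmas for statement 12 -/

private lemma le_coverPath {r : P → P → Prop} (hr : ∀ x y : P, x ⋖ y → r x y) :
    ∀ n (x y : P), (Finset.Icc x y).card ≤ n → x ≤ y → Relation.ReflTransGen r x y := by
  intro n
  induction n with
  | zero =>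
    intro x y hc h
    exact absurd (Finset.card_pos.mpr ⟨x, Finset.mem_Icc.mpr ⟨le_refl x, h⟩⟩) (by omega)
  | succ n ih =>
    intro x y hc h
    rcases eq_or_lt_of_le h with rfl | hlt
    · exact .refl
    · have hne : (Finset.Ioc x y).Nonempty := ⟨y, Finset.mem_Ioc.mpr ⟨hlt, le_refl y⟩⟩
      obtain ⟨z, hz, hzmin⟩ := Set.Finite.exists_minimalFor id _ (Finset.Ioc x y).finite_toSet
        (by exact_mod_cast hne)
      simp only [Finset.coe_Ioc, Set.mem_Ioc] at hz hzmin
      have hcov : x ⋖ z := by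
        refine ⟨hz.1, fun w hw hwz => ?_⟩
        have := hzmin (j := w) ⟨hw, hwz.le.trans hz.2⟩ hwz.le
        exact absurd this hwz.not_ge
      refine Relation.ReflTransGen.head (hr x z hcov) (ih z y ?_ hz.2)
      have hsub : Finset.Icc z y ⊆ Finset.Icc x y := Finset.Icc_subset_Icc hz.1.le le_rfl
      have hxnot : x ∉ Finset.Icc z y := by
        simp only [Finset.mem_Icc]
        exact fun ⟨h1, _⟩ => absurd (h1.trans_lt hz.1) (lt_irrefl z)
      have := Finset.card_lt_card (Finset.ssubset_iff_of_subset hsub |>.mpr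
        ⟨x, Finset.mem_Icc.mpr ⟨le_refl x, h⟩, hxnot⟩)
      omega

private lemma le_adjPath {D : DynkinDiagram Γ} {κ : P → Γ} (hNA : NA D κ) {x y : P}
    (h : x ≤ y) : Relation.ReflTransGen D.Adj (κ x) (κ y) := by
  have : Relation.ReflTransGen
      (fun u v : P => Relation.ReflTransGen D.Adj (κ u) (κ v)) x y :=
    le_coverPath (fun a b hab => Relation.ReflTransGen.single (hNA a b hab))
      (Finset.Icc x y).card x y le_rfl h
  clear h
  induction this with
  | refl => exact .refl
  | tail _ h2 ih => exact ih.trans h2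

private lemma comp_adjPath {D : DynkinDiagram Γ} {κ : P → Γ} (hNA : NA D κ) {x y : P}
    (h : Relation.ReflTransGen (fun u v : P => u ≤ v ∨ v ≤ u) x y) :
    Relation.ReflTransGen D.Adj (κ x) (κ y) := by
  induction h with
  | refl => exact .refl
  | tail _ h2 ih =>
    rcases h2 with h2 | h2
    · exact ih.trans (le_adjPath hNA h2)
    · exact ih.trans ((@Relation.ReflTransGen.stdSymm _ _ ⟨fun a b hab => hab.symm⟩).symm
        _ _ (le_adjPath hNA h2))

private lemma exists_color_max_s12 {κ : P → Γ} (hEC : EC κ) {a : Γ} {x0 : P} (hx0 : κ x0 = a)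
    {u : P} (hu : ∀ x : P, κ x = a → x ≤ u) :
    ∃ m : P, κ m = a ∧ ∀ y : P, κ y = κ m → ¬ m < y := by
  classical
  set S : Finset P := (Finset.Icc x0 u).filter (fun z => κ z = a) with hS
  have hx0S : x0 ∈ S := by
    simp only [hS, Finset.mem_filter, Finset.mem_Icc]
    exact ⟨⟨le_refl x0, hu x0 hx0⟩, hx0⟩
  obtain ⟨m, hmS, hmax⟩ := Set.Finite.exists_maximalFor id _ S.finite_toSet ⟨x0, hx0S⟩
  simp only [hS, Finset.coe_filter, Set.mem_setOf_eq, Finset.mem_Icc, id] at hmS hmax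
  refine ⟨m, hmS.2, fun y hy hlt => ?_⟩
  rw [hmS.2] at hy
  have hyS : x0 ≤ y ∧ y ≤ u := ⟨hmS.1.1.trans hlt.le, hu y hy⟩
  exact hlt.not_ge (hmax ⟨hyS, hy⟩ hlt.le)

private lemma bdd_of_adj {k : ℕ} {D : DynkinDiagram Γ} {κ : P → Γ}
    (hsurj : Function.Surjective κ) (hEC : EC κ) (hAC : AC D κ) (hUCB : UCB D κ k)
    {a b : Γ} (hadj : D.Adj b a) (ha : ColorBddAbove κ a) : ColorBddAbove κ b := by
  classical
  obtain ⟨u, hu⟩ := ha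
  obtain ⟨x0, hx0⟩ := hsurj a
  obtain ⟨m, hma, hmax⟩ := exists_color_max_s12 hEC hx0 hu
  obtain ⟨hfin, -⟩ := hUCB m hmax
  have hmemU : ∀ y : P, y ∈ hfin.toFinset ↔ m < y ∧ D.Adj (κ y) (κ m) := by
    intro y
    simp [USet, Set.Finite.mem_toFinset]
  set F : Finset P := hfin.toFinset.filter (fun y => κ y = b) with hF
  have hmemF : ∀ y : P, y ∈ F ↔ (m < y ∧ D.Adj (κ y) (κ m)) ∧ κ y = b := by
    intro y; simp only [hF, Finset.mem_filter, hmemU]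
  by_cases hFne : F.Nonempty
  · obtain ⟨w, hwF, hwmax⟩ := Set.Finite.exists_maximalFor id _ F.finite_toSet
      (by exact_mod_cast hFne)
    simp only [Finset.mem_coe, id] at hwF hwmax
    have hwb : κ w = b := ((hmemF w).mp hwF).2
    refine ⟨w, fun y hy => ?_⟩
    rcases hEC y w (by rw [hy, hwb]) with h | h
    · exact h
    · rcases eq_or_lt_of_le h with rfl | hlt
      · exact le_refl _
      · exfalso
        have hyF : y ∈ F := by
          rw [hmemF]
          refine ⟨⟨((hmemF w).mp hwF).1.1.trans hlt, ?_⟩, hy⟩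
          rw [hy, hma]; exact hadj
        exact hlt.not_ge (hwmax hyF hlt.le)
  · refine ⟨m, fun y hy => ?_⟩
    have hadj' : D.Adj (κ y) (κ m) := by rw [hy, hma]; exact hadj
    rcases hAC y m hadj' with h | h
    · exact h
    · rcases eq_or_lt_of_le h with rfl | hlt
      · exact le_refl _
      · exact absurd ⟨y, (hmemF y).mpr ⟨⟨hlt, hadj'⟩, hy⟩⟩ hFne

/-- a connected Γ-colored poset satisfying EC, NA, AC, UCBk has
either all color sets bounded above or all color sets unbounded above. -/
theorem statement12 (k : ℕ) (hk : 1 ≤ k) (D : DynkinDiagram Γ) (κ : P → Γ)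
    (hsurj : Function.Surjective κ) (hconn : PosetConnected P)
    (hEC : EC κ) (hNA : NA D κ) (hAC : AC D κ) (hUCB : UCB D κ k) :
    (∀ b : Γ, ColorBddAbove κ b) ∨ (∀ b : Γ, ¬ ColorBddAbove κ b) := by
  classical
  by_cases hex : ∃ a : Γ, ColorBddAbove κ a
  · left
    obtain ⟨a, ha⟩ := hex
    intro b
    obtain ⟨x0, hx0⟩ := hsurj a
    obtain ⟨y0, hy0⟩ := hsurj b
    have hpath : Relation.ReflTransGen D.Adj a b := by
      have := comp_adjPath hNA (hconn x0 y0)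
      rwa [hx0, hy0] at this
    clear hy0 hx0
    induction hpath with
    | refl => exact ha
    | @tail c d _ h2 ih =>
      exact bdd_of_adj hsurj hEC hAC hUCB h2.symm ih
  · right
    intro b hb
    exact hex ⟨b, hb⟩

end GCP
end

section
/- Let P be a connected infinite Γ-colored d-complete poset such that for every color b, the set P_b is unbounded above in P and unbounded below in P. Then P is a full heap. -/
namespace GCP

variable {Γ : Type*} [Fintype Γ] {P : Type*} [PartialOrder P] [LocallyFiniteOrder P]

section StrayerAux

variable {Γ : Type*} [Fintype Γ] {P : Type*} [PartialOrder P] [LocallyFiniteOrder P]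

lemma exists_covBy_le' {x y : P} (h : x < y) : ∃ u, x ⋖ u ∧ u ≤ y := by
  obtain ⟨m, hm, hmin⟩ := (Finset.Ioc x y).exists_minimal ⟨y, by simp [h]⟩
  rw [Finset.mem_Ioc] at hm
  refine ⟨m, ⟨hm.1, fun z hz1 hz2 => ?_⟩, hm.2⟩
  exact hz2.not_ge (hmin (Finset.mem_Ioc.mpr ⟨hz1, hz2.le.trans hm.2⟩) hz2.le)

lemma exists_le_covBy' {x y : P} (h : x < y) : ∃ v, x ≤ v ∧ v ⋖ y := by
  obtain ⟨m, hm, hmax⟩ := (Finset.Ico x y).exists_maximal ⟨x, by simp [h]⟩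
  rw [Finset.mem_Ico] at hm
  exact ⟨m, hm.1, hm.2, fun z hz1 hz2 =>
    hz1.not_ge (hmax (Finset.mem_Ico.mpr ⟨hm.1.trans hz1.le, hz2⟩) hz1.le)⟩

lemma exists_min_above' {κ : P → Γ} {b : Γ} (hEC : GCP.EC κ) {x : P}
    (hne : ∃ w, κ w = b ∧ x < w) :
    ∃ m, κ m = b ∧ x < m ∧ ∀ w, κ w = b → x < w → m ≤ w := by
  classical
  obtain ⟨w0, hw0, hxw0⟩ := hne
  have hne' : ((Finset.Ioc x w0).filter (fun w => κ w = b)).Nonempty :=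
    ⟨w0, by simp [hxw0, hw0]⟩
  obtain ⟨m, hm, hmin⟩ := Finset.exists_minimal hne'
  simp only [Finset.mem_filter, Finset.mem_Ioc] at hm
  refine ⟨m, hm.2, hm.1.1, fun w hw hxw => ?_⟩
  rcases hEC m w (hm.2.trans hw.symm) with h | h
  · exact h
  · by_contra hmw
    have hlt : w < m := lt_of_le_of_ne h (fun e => hmw (e ▸ le_refl m))
    exact hlt.not_ge (hmin (by
      simp only [Finset.mem_filter, Finset.mem_Ioc]
      exact ⟨⟨hxw, hlt.le.trans hm.1.2⟩, hw⟩) hlt.le)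

lemma exists_max_below' {κ : P → Γ} {b : Γ} (hEC : GCP.EC κ) {x : P}
    (hne : ∃ w, κ w = b ∧ w < x) :
    ∃ m, κ m = b ∧ m < x ∧ ∀ w, κ w = b → w < x → w ≤ m := by
  classical
  obtain ⟨w0, hw0, hxw0⟩ := hne
  have hne' : ((Finset.Ico w0 x).filter (fun w => κ w = b)).Nonempty :=
    ⟨w0, by simp [hxw0, hw0]⟩
  obtain ⟨m, hm, hmax⟩ := Finset.exists_maximal hne'
  simp only [Finset.mem_filter, Finset.mem_Ico] at hm
  refine ⟨m, hm.2, hm.1.2, fun w hw hxw => ?_⟩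
  rcases hEC m w (hm.2.trans hw.symm) with h | h
  · by_contra hmw
    have hlt : m < w := lt_of_le_of_ne h (fun e => hmw (e ▸ le_refl m))
    exact hlt.not_ge (hmax (by
      simp only [Finset.mem_filter, Finset.mem_Ico]
      exact ⟨⟨hm.1.1.trans hlt.le, hxw⟩, hw⟩) hlt.le)
  · exact h

lemma exists_gt_of_not_bddAbove' {κ : P → Γ} {b : Γ} (h : ¬ GCP.ColorBddAbove κ b)
    (x : P) (hcomp : ∀ w, κ w = b → w ≤ x ∨ x ≤ w) : ∃ w, κ w = b ∧ x < w := by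
  simp only [GCP.ColorBddAbove, not_exists] at h
  push_neg at h
  obtain ⟨w, hw, hwx⟩ := h x
  rcases hcomp w hw with h1 | h1
  · exact absurd h1 hwx
  · exact ⟨w, hw, lt_of_le_of_ne h1 (fun e => hwx (e ▸ le_refl x))⟩

lemma exists_lt_of_not_bddBelow' {κ : P → Γ} {b : Γ} (h : ¬ GCP.ColorBddBelow κ b)
    (x : P) (hcomp : ∀ w, κ w = b → w ≤ x ∨ x ≤ w) : ∃ w, κ w = b ∧ w < x := by
  simp only [GCP.ColorBddBelow, not_exists] at h
  push_neg at h
  obtain ⟨w, hw, hwx⟩ := h x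
  rcases hcomp w hw with h1 | h1
  · exact ⟨w, hw, lt_of_le_of_ne h1 (fun e => hwx (e ▸ le_refl x))⟩
  · exact absurd h1 hwx

end StrayerAux

/-- a connected infinite Γ-colored d-complete poset whose color
sets are all unbounded above and unbounded below is a full heap. -/
theorem statement13 [Infinite P] (D : DynkinDiagram Γ) (κ : P → Γ)
    (hsurj : Function.Surjective κ) (hconn : PosetConnected P) (hdc : DComplete D κ)
    (hub : ∀ b : Γ, ¬ ColorBddAbove κ b) (hlb : ∀ b : Γ, ¬ ColorBddBelow κ b) :
    FullHeap D κ := by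
  classical
  obtain ⟨hEC, hNA, hAC, hICE2, -⟩ := hdc
  -- G1
  have hG1 : G1 D κ := by
    constructor
    · intro a x hx y hy _
      exact hEC x y (hx.trans hy.symm)
    · intro b c hbc x hx y hy _
      rcases hx with hx | hx <;> rcases hy with hy | hy
      · exact hEC x y (hx.trans hy.symm)
      · exact hAC x y (by rw [hx, hy]; exact hbc)
      · exact hAC x y (by rw [hx, hy]; exact hbc.symm)
      · exact hEC x y (hx.trans hy.symm)
  -- G2
  have hG2 : G2 D κ := by
    have key : ∀ n (x y : P), (Finset.Ioc x y).card ≤ n → x ≤ y →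
        Relation.ReflTransGen
          (fun u v : P => u ≤ v ∧ (κ u = κ v ∨ D.Adj (κ u) (κ v))) x y := by
      intro n
      induction n with
      | zero =>
        intro x y hcard hxy
        rcases eq_or_lt_of_le hxy with rfl | hlt
        · exact Relation.ReflTransGen.refl
        · exfalso
          have hy : y ∈ Finset.Ioc x y := Finset.mem_Ioc.mpr ⟨hlt, le_refl y⟩
          rw [Finset.card_eq_zero.mp (Nat.le_zero.mp hcard)] at hy
          exact absurd hy (Finset.notMem_empty y)
      | succ n ih =>
        intro x y hcard hxy
        rcases eq_or_lt_of_le hxy with rfl | hlt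
        · exact Relation.ReflTransGen.refl
        · obtain ⟨u, hcov, huy⟩ := exists_covBy_le' hlt
          have hstep : x ≤ u ∧ (κ x = κ u ∨ D.Adj (κ x) (κ u)) :=
            ⟨hcov.lt.le, Or.inr (hNA x u hcov)⟩
          refine Relation.ReflTransGen.head hstep (ih u y ?_ huy)
          have hss : Finset.Ioc u y ⊂ Finset.Ioc x y := by
            refine ⟨Finset.Ioc_subset_Ioc_left hcov.lt.le, fun hsup => ?_⟩
            have := hsup (Finset.mem_Ioc.mpr ⟨hcov.lt, huy⟩)
            simp at this
          exact Nat.lt_succ_iff.mp (lt_of_lt_of_le (Finset.card_lt_card hss) hcard)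
    exact fun x y hxy => key (Finset.Ioc x y).card x y (le_refl _) hxy
  -- G3
  have hG3 : G3 κ := by
    intro a
    haveI hne : Nonempty {x : P | κ x = a} := ⟨⟨(hsurj a).choose, (hsurj a).choose_spec⟩⟩
    letI lin : LinearOrder {x : P | κ x = a} :=
      { (inferInstance : PartialOrder {x : P | κ x = a}) with
        le_total := fun u v => hEC u.1 v.1 (u.2.trans v.2.symm)
        toDecidableLE := Classical.decRel _ }
    letI lfo : LocallyFiniteOrder {x : P | κ x = a} :=
      Subtype.instLocallyFiniteOrder _
    haveI : NoMaxOrder {x : P | κ x = a} := by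
      constructor
      intro u
      obtain ⟨w, hw, huw⟩ := exists_gt_of_not_bddAbove' (hub a) u.1
        (fun w hw => hEC w u.1 (hw.trans u.2.symm))
      exact ⟨⟨w, hw⟩, huw⟩
    haveI : NoMinOrder {x : P | κ x = a} := by
      constructor
      intro u
      obtain ⟨w, hw, huw⟩ := exists_lt_of_not_bddBelow' (hlb a) u.1
        (fun w hw => hEC w u.1 (hw.trans u.2.symm))
      exact ⟨⟨w, hw⟩, huw⟩
    exact ⟨@orderIsoIntOfLinearSuccPredArch {x : P | κ x = a} lin
      (LinearLocallyFiniteOrder.succOrder (ι := {x : P | κ x = a}))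
      (LinearLocallyFiniteOrder.predOrder (ι := {x : P | κ x = a}))
      (by letI := LinearLocallyFiniteOrder.succOrder {x : P | κ x = a}; infer_instance) _ _ _⟩
  -- G4
  have hG4 : G4 D κ := by
    intro a b hab x hxa
    have hcompb : ∀ w, κ w = b → w ≤ x ∨ x ≤ w := fun w hw =>
      hAC w x (by rw [hw, hxa]; exact hab.symm)
    obtain ⟨w1, hw1, hxw1⟩ := exists_gt_of_not_bddAbove' (hub b) x hcompb
    obtain ⟨w2, hw2, hw2x⟩ := exists_lt_of_not_bddBelow' (hlb b) x hcompb
    obtain ⟨y, hyb, hxy, hymin⟩ := exists_min_above' hEC ⟨w1, hw1, hxw1⟩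
    obtain ⟨z, hzb, hzx, hzmax⟩ := exists_max_below' hEC ⟨w2, hw2, hw2x⟩
    have hcons : Consecutive κ b z y := by
      refine ⟨hzx.trans hxy, hzb, hyb, ?_⟩
      intro w hw hwb
      rw [Finset.mem_Ioo] at hw
      rcases hcompb w hwb with h | h
      · have hwx : w < x := lt_of_le_of_ne h (fun e => hab.1 ((e ▸ hwb : κ x = b) ▸ hxa.symm))
        exact hw.1.not_ge (hzmax w hwb hwx)
      · have hxw : x < w := lt_of_le_of_ne h (fun e => hab.1 ((e ▸ hwb : κ x = b) ▸ hxa.symm))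
        exact hw.2.not_ge (hymin w hwb hxw)
    have hsum := hICE2 b z y hcons
    obtain ⟨u, hcovzu, hux⟩ := exists_covBy_le' hzx
    obtain ⟨v, hxv, hcovvy⟩ := exists_le_covBy' hxy
    by_cases hu : u = x
    · exact ⟨z, hzb, Or.inr (hu ▸ hcovzu)⟩
    by_cases hv : v = x
    · exact ⟨y, hyb, Or.inl (hv ▸ hcovvy)⟩
    exfalso
    have hadju : D.Adj (κ u) b := by
      have := hNA z u hcovzu; rw [hzb] at this; exact this.symm
    have hadjv : D.Adj (κ v) b := by
      have := hNA v y hcovvy; rw [hyb] at this; exact this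
    have hadjx : D.Adj (κ x) b := by rw [hxa]; exact hab
    have hulx : u < x := lt_of_le_of_ne hux hu
    have hxlv : x < v := lt_of_le_of_ne hxv (Ne.symm hv)
    have hmemu : u ∈ Finset.Ioo z y := Finset.mem_Ioo.mpr ⟨hcovzu.lt, hulx.trans hxy⟩
    have hmemx : x ∈ Finset.Ioo z y := Finset.mem_Ioo.mpr ⟨hzx, hxy⟩
    have hmemv : v ∈ Finset.Ioo z y := Finset.mem_Ioo.mpr ⟨hzx.trans hxlv, hcovvy.lt⟩
    have h1u : (1:ℤ) ≤ -D.θ (κ u) b := by have := hadju.2; omega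
    have h1x : (1:ℤ) ≤ -D.θ (κ x) b := by have := hadjx.2; omega
    have h1v : (1:ℤ) ≤ -D.θ (κ v) b := by have := hadjv.2; omega
    have hsub : ({u, x, v} : Finset P) ⊆ Finset.Ioo z y := by
      intro t ht
      simp only [Finset.mem_insert, Finset.mem_singleton] at ht
      rcases ht with rfl | rfl | rfl <;> assumption
    have hux' : u ≠ x := hu
    have huv : u ≠ v := ne_of_lt (hulx.trans hxlv)
    have hxv' : x ≠ v := ne_of_lt hxlv
    have h3 : (3:ℤ) ≤ ∑ w ∈ ({u, x, v} : Finset P), -D.θ (κ w) b := by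
      rw [Finset.sum_insert (by simp [hux', huv]),
        Finset.sum_insert (by simp [hxv']), Finset.sum_singleton]
      linarith
    have hle : ∑ w ∈ ({u, x, v} : Finset P), -D.θ (κ w) b
        ≤ ∑ w ∈ Finset.Ioo z y, -D.θ (κ w) b := by
      refine Finset.sum_le_sum_of_subset_of_nonneg hsub (fun w hw _ => ?_)
      have hne : κ w ≠ b := hcons.2.2.2 w hw
      have := D.offdiag_nonpos (κ w) b hne
      omega
    rw [hsum] at hle
    linarith
  -- G5
  have hG5 : G5 D κ := by
    intro a x y hcon
    have h2 := hICE2 a x y hcon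
    have hxy := hcon.1
    have hxa := hcon.2.1
    have hya := hcon.2.2.1
    have hsum : ∑ z ∈ Finset.Ioo x y, D.θ (κ z) a = -2 := by
      have hneg : ∑ z ∈ Finset.Ioo x y, -D.θ (κ z) a
          = -∑ z ∈ Finset.Ioo x y, D.θ (κ z) a := Finset.sum_neg_distrib _
      rw [hneg] at h2
      linarith
    rw [← Finset.Ico_insert_right hxy.le, Finset.sum_insert (by simp),
      ← Finset.Ioo_insert_left hxy, Finset.sum_insert (by simp), hxa, hya, D.diag, hsum]
    norm_num
  exact ⟨hG1, hG2, hG3, hG4, hG5⟩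


end GCP
end

section
/- Let P be a Γ-colored poset that satisfies EC, NA, and AC. Then P is connected if and only if the Dynkin diagram Γ is connected. -/
namespace GCP

variable {Γ : Type*} [Fintype Γ] {P : Type*} [PartialOrder P] [LocallyFiniteOrder P]

theorem le_reflTransGen_covBy {u v : P} (h : u ≤ v) :
    Relation.ReflTransGen (· ⋖ ·) u v := by
  by_cases heq : u = v
  · exact heq ▸ Relation.ReflTransGen.refl
  · have hlt : u < v := lt_of_le_of_ne h heq
    have : ∃ n, (Finset.Icc u v).card = n := ⟨_, rfl⟩
    clear heq h
    obtain ⟨n, hn⟩ := this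
    induction n using Nat.strong_induction_on generalizing u with
    | _ n ih =>
      have hne : (Finset.Ioc u v).Nonempty := ⟨v, by simp [hlt]⟩
      obtain ⟨w, hw, hmin⟩ : ∃ w ∈ Finset.Ioc u v, ∀ z ∈ Finset.Ioc u v, ¬ z < w := by
        obtain ⟨w, hw⟩ := Finset.exists_minimal hne
        exact ⟨w, hw.1, fun z hz hzw => hw.not_lt hz hzw⟩
      simp only [Finset.mem_Ioc] at hw
      have hcov : u ⋖ w := by
        refine ⟨hw.1, fun z hz1 hz2 => ?_⟩
        exact hmin z (Finset.mem_Ioc.mpr ⟨hz1, hz2.le.trans hw.2⟩) hz2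
      rcases eq_or_lt_of_le hw.2 with rfl | hwv
      · exact Relation.ReflTransGen.single hcov
      · have hcard : (Finset.Icc w v).card < n := by
          rw [← hn]
          apply Finset.card_lt_card
          constructor
          · intro z hz
            simp only [Finset.mem_Icc] at *
            exact ⟨(hw.1.le).trans hz.1, hz.2⟩
          · intro hsub
            have := hsub (Finset.mem_Icc.mpr ⟨le_refl u, hlt.le⟩)
            simp only [Finset.mem_Icc] at this
            exact absurd this.1 (not_le_of_gt hw.1)
        exact Relation.ReflTransGen.head hcov (ih _ hcard hwv rfl)

/-- a Γ-colored poset satisfying EC, NA, and AC is connected iff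
its Dynkin diagram is connected. -/
theorem statement17 (D : DynkinDiagram Γ) (κ : P → Γ) (hsurj : Function.Surjective κ)
    (hEC : EC κ) (hNA : NA D κ) (hAC : AC D κ) :
    PosetConnected P ↔ D.Connected := by
  constructor
  · -- P connected → Γ connected
    intro hP a b
    obtain ⟨x, rfl⟩ := hsurj a
    obtain ⟨y, rfl⟩ := hsurj b
    have key : ∀ u v : P, u ≤ v → Relation.ReflTransGen D.Adj (κ u) (κ v) := by
      intro u v huv
      have hc := le_reflTransGen_covBy huv
      clear huv
      induction hc with
      | refl => exact Relation.ReflTransGen.refl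
      | tail _ hcov ih => exact ih.tail (hNA _ _ hcov)
    have := hP x y
    induction this with
    | refl => exact Relation.ReflTransGen.refl
    | tail _ hstep ih =>
      rcases hstep with h | h
      · exact ih.trans (key _ _ h)
      · exact ih.trans (by
          haveI : Std.Symm D.Adj := ⟨fun _ _ h => h.symm⟩
          exact Std.Symm.symm _ _ (key _ _ h))
  · -- Γ connected → P connected
    intro hD x y
    have key : ∀ a b : Γ, Relation.ReflTransGen D.Adj a b →
        ∀ u v : P, κ u = a → κ v = b →
        Relation.ReflTransGen (fun s t : P => s ≤ t ∨ t ≤ s) u v := by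
      intro a b hab
      induction hab with
      | refl =>
        intro u v hu hv
        exact Relation.ReflTransGen.single (hEC u v (hu.trans hv.symm))
      | @tail c d hac hcd ih =>
        intro u v hu hv
        obtain ⟨z, hz⟩ := hsurj c
        have h1 := ih u z hu hz
        have h2 : D.Adj (κ z) (κ v) := hz ▸ hv ▸ hcd
        exact h1.tail (hAC z v h2)
    exact key (κ x) (κ y) (hD _ _) x y rfl rfl

end GCP
end

section
/- Let Γ be a Dynkin diagram with generalized Cartan matrix θ and let λ : Γ → ℤ be a dominant integral weight, i.e., λ(b) ≥ 0 for all b ∈ Γ. Then there is no infinite sequence a_1, a_2, a_3, … of colors such that, setting λ_0 = λ and λ_j = s_{a_j}(λ_{j−1}) where (s_b(μ))(c) = μ(c) − μ(b)·θ_{bc}, one has λ_{j−1}(a_j) = 1 for every j ≥ 1. (Equivalently, there is no infinite sequence of colors for which every initial product s_{a_k} ⋯ s_{a_1} is a λ-minuscule Weyl group element.) -/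
namespace GCP

variable {Γ : Type*} [Fintype Γ] {P : Type*} [PartialOrder P] [LocallyFiniteOrder P]

/-- The sequence of weights `λ_0 = λ`, `λ_{n+1} = s_{a_n}(λ_n)`, where weights
are recorded by their integer values on the simple coroots and the simple
reflection acts by `(s_b μ)(c) = μ(c) − μ(b)·θ b c`. -/
def weightSeq (D : DynkinDiagram Γ) (lam : Γ → ℤ) (a : ℕ → Γ) : ℕ → Γ → ℤ
  | 0 => lam
  | n + 1 => fun c => weightSeq D lam a n c - weightSeq D lam a n (a n) * D.θ (a n) c


namespace S19
set_option linter.unusedSectionVars false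

variable [DecidableEq Γ] (D : DynkinDiagram Γ) (lam : Γ → ℤ) (a : ℕ → Γ)

lemma ws_succ (hyp : ∀ j, weightSeq D lam a j (a j) = 1) (n : ℕ) (c : Γ) :
    weightSeq D lam a (n + 1) c = weightSeq D lam a n c - D.θ (a n) c := by
  simp only [weightSeq, hyp n, one_mul]

lemma ws_mono (hyp : ∀ j, weightSeq D lam a j (a j) = 1) {n : ℕ} {c : Γ} (h : a n ≠ c) :
    weightSeq D lam a n c ≤ weightSeq D lam a (n + 1) c := by
  rw [ws_succ D lam a hyp]
  have := D.offdiag_nonpos _ _ h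
  omega

lemma ws_ge (hdom : ∀ b : Γ, 0 ≤ lam b) (hyp : ∀ j, weightSeq D lam a j (a j) = 1)
    (n : ℕ) (c : Γ) : -1 ≤ weightSeq D lam a n c := by
  induction n with
  | zero => have := hdom c; simp only [weightSeq]; omega
  | succ n ih =>
    by_cases h : a n = c
    · rw [ws_succ D lam a hyp, ← h, hyp n, D.diag]; norm_num
    · exact le_trans ih (ws_mono D lam a hyp h)

/-- The set of colors that fire infinitely often. -/
def SInf : Set Γ := {c | ∀ N, ∃ n, N ≤ n ∧ a n = c}

lemma ws_le_one (hyp : ∀ j, weightSeq D lam a j (a j) = 1) {c : Γ} (hc : c ∈ SInf a)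
    (n : ℕ) : weightSeq D lam a n c ≤ 1 := by
  by_contra hlt
  push_neg at hlt
  have key : ∀ m, n ≤ m → 1 < weightSeq D lam a m c := by
    intro m hm
    induction m, hm using Nat.le_induction with
    | base => exact hlt
    | succ m hm ih =>
      by_cases h : a m = c
      · exfalso; have h2 := hyp m; rw [h] at h2; omega
      · exact lt_of_lt_of_le ih (ws_mono D lam a hyp h)
  obtain ⟨m, hm, ham⟩ := hc n
  have h2 := hyp m; rw [ham] at h2
  have := key m hm
  omega

lemma exists_N0 : ∃ N₀ : ℕ, ∀ n, N₀ ≤ n → a n ∈ SInf a := by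
  classical
  have h : ∀ c : Γ, c ∉ SInf a → ∃ N, ∀ n, N ≤ n → a n ≠ c := by
    intro c hc
    simp only [SInf, Set.mem_setOf_eq, not_forall] at hc
    obtain ⟨N, hN⟩ := hc
    push_neg at hN
    exact ⟨N, hN⟩
  choose! F hF using h
  refine ⟨Finset.univ.sup F, fun n hn => ?_⟩
  by_contra hns
  exact hF (a n) hns n (le_trans (Finset.le_sup (Finset.mem_univ _)) hn) rfl

/-- The connected component (inside `SInf`) of the base color `c₀`. -/
def Sp (c₀ : Γ) : Set Γ :=
  {b | Relation.ReflTransGen (fun u v => u ∈ SInf a ∧ v ∈ SInf a ∧ D.Adj u v) c₀ b}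

variable {D} {a}

lemma Sp_self {c₀ : Γ} : c₀ ∈ Sp D a c₀ := Relation.ReflTransGen.refl

lemma Sp_sub {c₀ : Γ} (hc₀ : c₀ ∈ SInf a) : Sp D a c₀ ⊆ SInf a := by
  intro b hb
  induction hb with
  | refl => exact hc₀
  | tail _ h _ => exact h.2.1

lemma Sp_closed {c₀ b c : Γ} (hc₀ : c₀ ∈ SInf a) (hb : b ∈ Sp D a c₀)
    (hadj : D.Adj b c) (hcS : c ∈ SInf a) : c ∈ Sp D a c₀ :=
  Relation.ReflTransGen.tail hb ⟨Sp_sub hc₀ hb, hcS, hadj⟩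

lemma Sp_conn {c₀ x : Γ} (hx : x ∈ Sp D a c₀) :
    Relation.ReflTransGen
      (fun u v => u ∈ Sp D a c₀ ∧ v ∈ Sp D a c₀ ∧ D.Adj u v) c₀ x := by
  induction hx with
  | refl => exact Relation.ReflTransGen.refl
  | tail hab h ih => exact ih.tail ⟨hab, hab.tail h, h.2.2⟩

lemma Sp_conn' {c₀ x y : Γ} (hx : x ∈ Sp D a c₀) (hy : y ∈ Sp D a c₀) :
    Relation.ReflTransGen
      (fun u v => u ∈ Sp D a c₀ ∧ v ∈ Sp D a c₀ ∧ D.Adj u v) x y := by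
  have hsymm : Symmetric (fun u v => u ∈ Sp D a c₀ ∧ v ∈ Sp D a c₀ ∧ D.Adj u v) :=
    fun u v h => ⟨h.2.1, h.1, h.2.2.symm⟩
  haveI : Std.Symm (fun u v => u ∈ Sp D a c₀ ∧ v ∈ Sp D a c₀ ∧ D.Adj u v) := ⟨fun u v h => hsymm h⟩
  exact Relation.ReflTransGen.trans (Std.Symm.symm _ _ (Sp_conn hx))
    (Sp_conn hy)

variable (D) (a)

/-- Number of firings of color `b` in the window `[n₁, n)`. -/
def mct (n₁ n : ℕ) (b : Γ) : ℕ := ((Finset.Ico n₁ n).filter (fun j => a j = b)).card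

lemma mct_base (n₁ : ℕ) (b : Γ) : mct a n₁ n₁ b = 0 := by simp [mct]

lemma mct_succ {n₁ n : ℕ} (h : n₁ ≤ n) (b : Γ) :
    mct a n₁ (n + 1) b = mct a n₁ n b + (if a n = b then 1 else 0) := by
  unfold mct
  rw [Nat.Ico_succ_right_eq_insert_Ico h, Finset.filter_insert]
  have hn : n ∉ (Finset.Ico n₁ n).filter (fun j => a j = b) := by
    simp [Finset.mem_filter]
  split
  · rw [Finset.card_insert_of_notMem hn]
  · simp

lemma mct_pos {n₁ n j : ℕ} (h1 : n₁ ≤ j) (h2 : j < n) : 1 ≤ mct a n₁ n (a j) := by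
  have : j ∈ (Finset.Ico n₁ n).filter (fun i => a i = a j) := by
    simp [Finset.mem_Ico, h1, h2]
  exact Finset.card_pos.mpr ⟨j, this⟩

variable {D} {a}

lemma rel (hyp : ∀ j, weightSeq D lam a j (a j) = 1) (T : Finset Γ) (n₁ : ℕ)
    (hvan : ∀ n, n₁ ≤ n → a n ∉ T → ∀ c ∈ T, D.θ (a n) c = 0) :
    ∀ n, n₁ ≤ n → ∀ c ∈ T,
      weightSeq D lam a n c
        = weightSeq D lam a n₁ c - ∑ b ∈ T, (mct a n₁ n b : ℤ) * D.θ b c := by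
  intro n hn
  induction n, hn using Nat.le_induction with
  | base => intro c hc; simp [mct_base]
  | succ n hn ih =>
    intro c hc
    rw [ws_succ D lam a hyp, ih c hc]
    have hsum : ∑ b ∈ T, (mct a n₁ (n + 1) b : ℤ) * D.θ b c
        = (∑ b ∈ T, (mct a n₁ n b : ℤ) * D.θ b c)
          + (if a n ∈ T then D.θ (a n) c else 0) := by
      have : ∀ b ∈ T, (mct a n₁ (n + 1) b : ℤ) * D.θ b c
          = (mct a n₁ n b : ℤ) * D.θ b c + (if a n = b then D.θ b c else 0) := by
        intro b _
        rw [mct_succ a hn]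
        push_cast
        split <;> ring
      rw [Finset.sum_congr rfl this, Finset.sum_add_distrib]
      congr 1
      rw [Finset.sum_ite_eq]
    rw [hsum]
    by_cases hin : a n ∈ T
    · rw [if_pos hin]; ring
    · rw [if_neg hin, hvan n hn hin c hc]; ring

lemma Ginv (hyp : ∀ j, weightSeq D lam a j (a j) = 1) (T : Finset Γ) (n₁ : ℕ)
    (hvan : ∀ n, n₁ ≤ n → a n ∉ T → ∀ c ∈ T, D.θ (a n) c = 0)
    (d : Γ → ℚ)
    (hsym : ∀ b ∈ T, ∀ c ∈ T, (D.θ b c : ℚ) * d c = (D.θ c b : ℚ) * d b) :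
    ∀ n, n₁ ≤ n →
      ∑ b ∈ T, ∑ c ∈ T,
          (mct a n₁ n b : ℚ) * (mct a n₁ n c : ℚ) * ((D.θ b c : ℚ) * d c)
        = 2 * ∑ c ∈ T, (mct a n₁ n c : ℚ) * d c * ((weightSeq D lam a n₁ c : ℚ)) := by
  intro n hn
  induction n, hn using Nat.le_induction with
  | base => simp [mct_base]
  | succ n hn ih =>
    by_cases hin : a n ∈ T
    · have hrel := rel lam hyp T n₁ hvan n hn (a n) hin
      have hwsn : weightSeq D lam a n (a n) = 1 := hyp n
      have hkey : ∑ b ∈ T, (mct a n₁ n b : ℚ) * (D.θ b (a n) : ℚ)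
          = (weightSeq D lam a n₁ (a n) : ℚ) - 1 := by
        have h2 : (weightSeq D lam a n (a n) : ℚ)
            = (weightSeq D lam a n₁ (a n) : ℚ)
              - ∑ b ∈ T, (mct a n₁ n b : ℚ) * (D.θ b (a n) : ℚ) := by
          rw [hrel]; push_cast; ring
        rw [hwsn] at h2
        push_cast at h2
        linarith
      have hmct : ∀ b : Γ, (mct a n₁ (n + 1) b : ℚ)
          = (mct a n₁ n b : ℚ) + (if a n = b then 1 else 0) := by
        intro b; rw [mct_succ a hn]; push_cast; ring
      have expand : ∀ b ∈ T, ∀ c ∈ T,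
          (mct a n₁ (n+1) b : ℚ) * (mct a n₁ (n+1) c : ℚ) * ((D.θ b c : ℚ) * d c)
          = (mct a n₁ n b : ℚ) * (mct a n₁ n c : ℚ) * ((D.θ b c : ℚ) * d c)
            + (mct a n₁ n b : ℚ) * (if a n = c then (D.θ b c : ℚ) * d c else 0)
            + (if a n = b then (mct a n₁ n c : ℚ) * ((D.θ b c : ℚ) * d c) else 0)
            + (if a n = b then (if a n = c then (D.θ b c : ℚ) * d c else 0) else 0) := by
        intro b _ c _
        rw [hmct b, hmct c]
        split_ifs <;> ring
      have hS2 : ∑ b ∈ T, ∑ c ∈ T,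
            ((mct a n₁ n b : ℚ) * (if a n = c then (D.θ b c : ℚ) * d c else 0))
          = ∑ b ∈ T, (mct a n₁ n b : ℚ) * ((D.θ b (a n) : ℚ) * d (a n)) := by
        refine Finset.sum_congr rfl fun b hb => ?_
        rw [← Finset.mul_sum, Finset.sum_ite_eq, if_pos hin]
      have hS3 : ∑ b ∈ T, ∑ c ∈ T,
            (if a n = b then (mct a n₁ n c : ℚ) * ((D.θ b c : ℚ) * d c) else 0)
          = ∑ c ∈ T, (mct a n₁ n c : ℚ) * ((D.θ (a n) c : ℚ) * d c) := by
        have h1 : ∀ b ∈ T, ∑ c ∈ T,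
              (if a n = b then (mct a n₁ n c : ℚ) * ((D.θ b c : ℚ) * d c) else 0)
            = (if a n = b then ∑ c ∈ T, (mct a n₁ n c : ℚ) * ((D.θ b c : ℚ) * d c) else 0) := by
          intro b _
          split <;> simp
        rw [Finset.sum_congr rfl h1, Finset.sum_ite_eq, if_pos hin]
      have hS4 : ∑ b ∈ T, ∑ c ∈ T,
            (if a n = b then (if a n = c then (D.θ b c : ℚ) * d c else 0) else 0)
          = 2 * d (a n) := by
        have h1 : ∀ b ∈ T, ∑ c ∈ T,
              (if a n = b then (if a n = c then (D.θ b c : ℚ) * d c else 0) else 0)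
            = (if a n = b then (D.θ b (a n) : ℚ) * d (a n) else 0) := by
          intro b _
          split
          · rw [Finset.sum_ite_eq, if_pos hin]
          · simp
        rw [Finset.sum_congr rfl h1, Finset.sum_ite_eq, if_pos hin, D.diag]
        push_cast; ring
      have hL : ∑ b ∈ T, ∑ c ∈ T,
            (mct a n₁ (n+1) b : ℚ) * (mct a n₁ (n+1) c : ℚ) * ((D.θ b c : ℚ) * d c)
          = (∑ b ∈ T, ∑ c ∈ T,
              (mct a n₁ n b : ℚ) * (mct a n₁ n c : ℚ) * ((D.θ b c : ℚ) * d c))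
            + (∑ b ∈ T, (mct a n₁ n b : ℚ) * ((D.θ b (a n) : ℚ) * d (a n)))
            + (∑ c ∈ T, (mct a n₁ n c : ℚ) * ((D.θ (a n) c : ℚ) * d c))
            + 2 * d (a n) := by
        rw [← hS2, ← hS3, ← hS4]
        rw [Finset.sum_congr rfl fun b hb => Finset.sum_congr rfl fun c hc => expand b hb c hc]
        simp only [Finset.sum_add_distrib]
      have hA2 : ∑ b ∈ T, (mct a n₁ n b : ℚ) * ((D.θ b (a n) : ℚ) * d (a n))
          = ((weightSeq D lam a n₁ (a n) : ℚ) - 1) * d (a n) := by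
        rw [← hkey, Finset.sum_mul]
        exact Finset.sum_congr rfl fun b _ => by ring
      have hA3 : ∑ c ∈ T, (mct a n₁ n c : ℚ) * ((D.θ (a n) c : ℚ) * d c)
          = ((weightSeq D lam a n₁ (a n) : ℚ) - 1) * d (a n) := by
        rw [← hA2]
        exact Finset.sum_congr rfl fun c hc => by rw [hsym (a n) hin c hc]
      have hR : ∑ c ∈ T, (mct a n₁ (n+1) c : ℚ) * d c * ((weightSeq D lam a n₁ c : ℚ))
          = (∑ c ∈ T, (mct a n₁ n c : ℚ) * d c * ((weightSeq D lam a n₁ c : ℚ)))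
            + d (a n) * (weightSeq D lam a n₁ (a n) : ℚ) := by
        have h1 : ∀ c ∈ T, (mct a n₁ (n+1) c : ℚ) * d c * ((weightSeq D lam a n₁ c : ℚ))
            = (mct a n₁ n c : ℚ) * d c * ((weightSeq D lam a n₁ c : ℚ))
              + (if a n = c then d c * (weightSeq D lam a n₁ c : ℚ) else 0) := by
          intro c _
          rw [hmct c]
          split <;> ring
        rw [Finset.sum_congr rfl h1, Finset.sum_add_distrib, Finset.sum_ite_eq, if_pos hin]
      rw [hL, hA2, hA3, hR]
      linarith [ih]
    · have hmct : ∀ b ∈ T, (mct a n₁ (n + 1) b : ℚ) = (mct a n₁ n b : ℚ) := by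
        intro b hb
        have hne : a n ≠ b := fun h => hin (h ▸ hb)
        rw [mct_succ a hn, if_neg hne]; push_cast; ring
      calc ∑ b ∈ T, ∑ c ∈ T,
            (mct a n₁ (n+1) b : ℚ) * (mct a n₁ (n+1) c : ℚ) * ((D.θ b c : ℚ) * d c)
          = ∑ b ∈ T, ∑ c ∈ T,
            (mct a n₁ n b : ℚ) * (mct a n₁ n c : ℚ) * ((D.θ b c : ℚ) * d c) := by
            refine Finset.sum_congr rfl fun b hb => Finset.sum_congr rfl fun c hc => ?_
            rw [hmct b hb, hmct c hc]
        _ = 2 * ∑ c ∈ T, (mct a n₁ n c : ℚ) * d c * ((weightSeq D lam a n₁ c : ℚ)) := ih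
        _ = _ := by
            refine congrArg _ (Finset.sum_congr rfl fun c hc => ?_)
            rw [hmct c hc]

instance adjDec (D : DynkinDiagram Γ) (b c : Γ) : Decidable (D.Adj b c) :=
  decidable_of_iff (b ≠ c ∧ D.θ b c < 0) Iff.rfl

/-- Dichotomy: a connected finite graph piece either carries a symmetrizer for `θ`
or contains a nonempty subset of minimum degree 2. -/
lemma dich (D : DynkinDiagram Γ) : ∀ (n : ℕ) (T : Finset Γ), T.card ≤ n → T.Nonempty →
    (∀ x ∈ T, ∀ y ∈ T,
      Relation.ReflTransGen (fun u v => u ∈ T ∧ v ∈ T ∧ D.Adj u v) x y) →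
    (∃ d : Γ → ℚ, (∀ b ∈ T, 0 < d b) ∧
        (∀ b ∈ T, ∀ c ∈ T, (D.θ b c : ℚ) * d c = (D.θ c b : ℚ) * d b)) ∨
    (∃ T₀ : Finset Γ, T₀ ⊆ T ∧ T₀.Nonempty ∧
        ∀ b ∈ T₀, 2 ≤ (T₀.filter (fun c => D.Adj b c)).card) := by
  intro n
  induction n with
  | zero =>
    intro T hcard hne _
    rw [Nat.le_zero, Finset.card_eq_zero] at hcard
    exact absurd hcard (Finset.nonempty_iff_ne_empty.mp hne)
  | succ n IH =>
    intro T hcard hne hconn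
    by_cases hdeg : ∀ b ∈ T, 2 ≤ (T.filter (fun c => D.Adj b c)).card
    · exact Or.inr ⟨T, Finset.Subset.refl _, hne, hdeg⟩
    push_neg at hdeg
    obtain ⟨ℓ, hℓT, hℓdeg⟩ := hdeg
    interval_cases hfc : (T.filter (fun c => D.Adj ℓ c)).card
    · -- no neighbors: T = {ℓ}
      left
      have hT : ∀ x ∈ T, x = ℓ := by
        intro x hx
        rcases (hconn ℓ hℓT x hx).cases_head with h | ⟨b, hb, _⟩
        · exact h.symm
        · exfalso
          have : b ∈ T.filter (fun c => D.Adj ℓ c) := Finset.mem_filter.mpr ⟨hb.2.1, hb.2.2⟩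
          rw [Finset.card_eq_zero.mp hfc] at this
          exact absurd this (Finset.notMem_empty b)
      refine ⟨fun _ => 1, fun b _ => one_pos, fun b hb c hc => ?_⟩
      rw [hT b hb, hT c hc]
    · -- exactly one neighbor p : remove the leaf ℓ
      obtain ⟨p, hp⟩ := Finset.card_eq_one.mp hfc
      have hpmem : p ∈ T ∧ D.Adj ℓ p := by
        have : p ∈ T.filter (fun c => D.Adj ℓ c) := by rw [hp]; exact Finset.mem_singleton_self p
        exact ⟨(Finset.mem_filter.mp this).1, (Finset.mem_filter.mp this).2⟩
      have hunique : ∀ c ∈ T, D.Adj ℓ c → c = p := by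
        intro c hc hadj
        have : c ∈ T.filter (fun c => D.Adj ℓ c) := Finset.mem_filter.mpr ⟨hc, hadj⟩
        rw [hp] at this
        exact Finset.mem_singleton.mp this
      have hℓp : ℓ ≠ p := hpmem.2.1
      set T' := T.erase ℓ with hT'
      have hpT' : p ∈ T' := Finset.mem_erase.mpr ⟨hℓp.symm, hpmem.1⟩
      set f : Γ → Γ := fun v => if v = ℓ then p else v with hf
      have hfeq : ∀ v, v = ℓ → f v = p := by intro v hv; simp [hf, hv]
      have hfne : ∀ v, v ≠ ℓ → f v = v := by intro v hv; simp [hf, hv]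
      have hclaim : ∀ x y : Γ,
          Relation.ReflTransGen (fun u v => u ∈ T ∧ v ∈ T ∧ D.Adj u v) x y →
          Relation.ReflTransGen (fun u v => u ∈ T' ∧ v ∈ T' ∧ D.Adj u v) (f x) (f y) := by
        intro x y h
        induction h with
        | refl => exact Relation.ReflTransGen.refl
        | tail hxb hby ih =>
          rename_i b y'
          by_cases hbℓ : b = ℓ
          · by_cases hyℓ : y' = ℓ
            · exfalso; exact hby.2.2.1 (hbℓ.trans hyℓ.symm)
            · have hyp' : y' = p := hunique y' hby.2.1 (hbℓ ▸ hby.2.2)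
              rw [hfeq b hbℓ] at ih
              rw [(hyp' ▸ hfne y' hyℓ : f y' = p)]
              exact ih
          · by_cases hyℓ : y' = ℓ
            · have hbp : b = p := hunique b hby.1 (by
                have : D.Adj b ℓ := hyℓ ▸ hby.2.2
                exact this.symm)
              rw [(hbp ▸ hfne b hbℓ : f b = p)] at ih
              rw [hfeq y' hyℓ]
              exact ih
            · rw [hfne b hbℓ] at ih
              rw [hfne y' hyℓ]
              exact ih.tail ⟨Finset.mem_erase.mpr ⟨hbℓ, hby.1⟩,
                Finset.mem_erase.mpr ⟨hyℓ, hby.2.1⟩, hby.2.2⟩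
      have hconn' : ∀ x ∈ T', ∀ y ∈ T',
          Relation.ReflTransGen (fun u v => u ∈ T' ∧ v ∈ T' ∧ D.Adj u v) x y := by
        intro x hx y hy
        have hxe := Finset.mem_erase.mp hx
        have hye := Finset.mem_erase.mp hy
        have := hclaim x y (hconn x hxe.2 y hye.2)
        rwa [hfne x hxe.1, hfne y hye.1] at this
      have hcard' : T'.card ≤ n := by
        rw [hT', Finset.card_erase_of_mem hℓT]
        omega
      rcases IH T' hcard' ⟨p, hpT'⟩ hconn' with ⟨d', hd'pos, hd'sym⟩ | ⟨T₀, hT₀, hT₀ne, hT₀deg⟩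
      · left
        have hθℓp : (D.θ ℓ p : ℚ) < 0 := by exact_mod_cast hpmem.2.2
        have hθpℓ : (D.θ p ℓ : ℚ) < 0 := by exact_mod_cast hpmem.2.symm.2
        refine ⟨fun v => if v = ℓ then (D.θ ℓ p : ℚ) * d' p / (D.θ p ℓ : ℚ) else d' v, ?_, ?_⟩
        · intro b hb
          dsimp only
          by_cases hbℓ : b = ℓ
          · rw [if_pos hbℓ]
            apply div_pos_of_neg_of_neg _ hθpℓ
            exact mul_neg_of_neg_of_pos hθℓp (hd'pos p hpT')
          · rw [if_neg hbℓ]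
            exact hd'pos b (Finset.mem_erase.mpr ⟨hbℓ, hb⟩)
        · intro b hb c hc
          dsimp only
          by_cases hbℓ : b = ℓ <;> by_cases hcℓ : c = ℓ
          · rw [hbℓ, hcℓ]
          · subst hbℓ
            rw [if_neg hcℓ, if_pos rfl]
            by_cases hcp : c = p
            · subst hcp
              rw [mul_comm ((D.θ c b : ℚ)) _, div_mul_cancel₀ _ (ne_of_lt hθpℓ)]
            · have hnadj : ¬ D.Adj b c := fun hadj => hcp (hunique c hc hadj)
              have hbc : b ≠ c := fun e => hcℓ e.symm
              have hθ1 : D.θ b c = 0 := by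
                have h1 := D.offdiag_nonpos b c hbc
                by_contra h0
                exact hnadj ⟨hbc, lt_of_le_of_ne h1 h0⟩
              have hθ2 : D.θ c b = 0 := (D.zero_iff b c hbc).mp hθ1
              rw [hθ1, hθ2]
              norm_num
          · subst hcℓ
            rw [if_neg hbℓ, if_pos rfl]
            by_cases hbp : b = p
            · subst hbp
              rw [mul_comm ((D.θ b c : ℚ)) _, div_mul_cancel₀ _ (ne_of_lt hθpℓ)]
            · have hnadj : ¬ D.Adj c b := fun hadj => hbp (hunique b hb hadj)
              have hcb : c ≠ b := fun e => hbℓ e.symm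
              have hθ1 : D.θ c b = 0 := by
                have h1 := D.offdiag_nonpos c b hcb
                by_contra h0
                exact hnadj ⟨hcb, lt_of_le_of_ne h1 h0⟩
              have hθ2 : D.θ b c = 0 := (D.zero_iff c b hcb).mp hθ1
              rw [hθ1, hθ2]
              norm_num
          · rw [if_neg hbℓ, if_neg hcℓ]
            exact hd'sym b (Finset.mem_erase.mpr ⟨hbℓ, hb⟩) c (Finset.mem_erase.mpr ⟨hcℓ, hc⟩)
      · exact Or.inr ⟨T₀, hT₀.trans (Finset.erase_subset ℓ T), hT₀ne, hT₀deg⟩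

lemma theta_zero {D : DynkinDiagram Γ} {b c : Γ} (hne : b ≠ c) (hnadj : ¬ D.Adj b c) :
    D.θ b c = 0 := by
  by_contra h0
  exact hnadj ⟨hne, lt_of_le_of_ne (D.offdiag_nonpos b c hne) h0⟩

lemma symmetrizer (D : DynkinDiagram Γ) (T : Finset Γ) (hne : T.Nonempty)
    (hconn : ∀ x ∈ T, ∀ y ∈ T,
      Relation.ReflTransGen (fun u v => u ∈ T ∧ v ∈ T ∧ D.Adj u v) x y)
    (w : Γ → ℕ) (hw : ∀ b ∈ T, 1 ≤ w b)
    (hnull : ∀ c ∈ T, ∑ b ∈ T, (w b : ℤ) * D.θ b c = 0) :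
    ∃ d : Γ → ℚ, (∀ b ∈ T, 0 < d b) ∧
      (∀ b ∈ T, ∀ c ∈ T, (D.θ b c : ℚ) * d c = (D.θ c b : ℚ) * d b) := by
  rcases dich D T.card T le_rfl hne hconn with hd | ⟨T₀, hT₀, hT₀ne, hT₀deg⟩
  · exact hd
  -- rigidity: the min-degree-2 subset forces T₀ = T and all adjacent θ's equal to -1
  have hfiltereq : ∀ b, (T₀.erase b).filter (fun c => D.Adj b c)
      = T₀.filter (fun c => D.Adj b c) := by
    intro b
    ext c
    simp only [Finset.mem_filter, Finset.mem_erase]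
    constructor
    · rintro ⟨⟨_, h1⟩, h2⟩; exact ⟨h1, h2⟩
    · rintro ⟨h1, h2⟩; exact ⟨⟨fun e => h2.1 e.symm, h1⟩, h2⟩
  have hAle : ∀ b ∈ T, (∑ c ∈ T₀, D.θ b c) ≤ 0 := by
    intro b hb
    by_cases hbT₀ : b ∈ T₀
    · have hsplit : ∑ c ∈ T₀, D.θ b c = D.θ b b + ∑ c ∈ T₀.erase b, D.θ b c :=
        (Finset.add_sum_erase T₀ _ hbT₀).symm
      have hsplit2 : ∑ c ∈ T₀.erase b, D.θ b c
          = ∑ c ∈ (T₀.erase b).filter (fun c => D.Adj b c), D.θ b c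
            + ∑ c ∈ (T₀.erase b).filter (fun c => ¬ D.Adj b c), D.θ b c :=
        (Finset.sum_filter_add_sum_filter_not _ _ _).symm
      have hb1 : ∑ c ∈ (T₀.erase b).filter (fun c => D.Adj b c), D.θ b c
          ≤ -((T₀.filter (fun c => D.Adj b c)).card : ℤ) := by
        rw [hfiltereq b]
        calc ∑ c ∈ T₀.filter (fun c => D.Adj b c), D.θ b c
            ≤ ∑ _c ∈ T₀.filter (fun c => D.Adj b c), (-1 : ℤ) := by
              refine Finset.sum_le_sum fun c hc => ?_
              have := (Finset.mem_filter.mp hc).2.2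
              omega
          _ = -((T₀.filter (fun c => D.Adj b c)).card : ℤ) := by simp
      have hb2 : ∑ c ∈ (T₀.erase b).filter (fun c => ¬ D.Adj b c), D.θ b c ≤ 0 := by
        refine Finset.sum_nonpos fun c hc => ?_
        have hc' := Finset.mem_filter.mp hc
        exact D.offdiag_nonpos b c fun e => (Finset.mem_erase.mp hc'.1).1 e.symm
      have hcard2 := hT₀deg b hbT₀
      rw [hsplit, hsplit2, D.diag]
      have : (2 : ℤ) ≤ ((T₀.filter (fun c => D.Adj b c)).card : ℤ) := by exact_mod_cast hcard2
      omega
    · refine Finset.sum_nonpos fun c hc => ?_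
      exact D.offdiag_nonpos b c fun e => hbT₀ (e ▸ hc)
  have hsum0 : ∑ b ∈ T, (w b : ℤ) * (∑ c ∈ T₀, D.θ b c) = 0 := by
    calc ∑ b ∈ T, (w b : ℤ) * (∑ c ∈ T₀, D.θ b c)
        = ∑ b ∈ T, ∑ c ∈ T₀, (w b : ℤ) * D.θ b c := by
          exact Finset.sum_congr rfl fun b _ => Finset.mul_sum _ _ _
      _ = ∑ c ∈ T₀, ∑ b ∈ T, (w b : ℤ) * D.θ b c := Finset.sum_comm
      _ = 0 := Finset.sum_eq_zero fun c hc => hnull c (hT₀ hc)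
  have hzero : ∀ b ∈ T, ∑ c ∈ T₀, D.θ b c = 0 := by
    have heach := (Finset.sum_eq_zero_iff_of_nonpos (fun b hb =>
      mul_nonpos_of_nonneg_of_nonpos (by positivity) (hAle b hb))).mp hsum0
    intro b hb
    have hwb : (w b : ℤ) ≠ 0 := by
      have := hw b hb; positivity
    have := heach b hb
    rcases mul_eq_zero.mp this with h | h
    · exact absurd h hwb
    · exact h
  have hT₀T : ∀ x ∈ T, x ∈ T₀ := by
    obtain ⟨b₀, hb₀⟩ := hT₀ne
    intro x hx
    have hpath := hconn b₀ (hT₀ hb₀) x hx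
    clear hx
    induction hpath with
    | refl => exact hb₀
    | tail hxb hby ih =>
      rename_i u v
      by_contra hv
      have hinner := hzero v hby.2.1
      have heach := (Finset.sum_eq_zero_iff_of_nonpos (fun c hc =>
        D.offdiag_nonpos v c (fun e => hv (e ▸ hc)))).mp hinner
      have hθvu := heach u ih
      have h2 : D.θ v u < 0 := (hby.2.2.symm).2
      omega
  have hT₀eq : T₀ = T := Finset.Subset.antisymm hT₀ hT₀T
  subst hT₀eq
  have hneg1 : ∀ b ∈ T₀, ∀ c ∈ T₀, D.Adj b c → D.θ b c = -1 := by
    intro b hb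
    have hzb := hzero b hb
    have hsplit : ∑ c ∈ T₀, D.θ b c = D.θ b b + ∑ c ∈ T₀.erase b, D.θ b c :=
      (Finset.add_sum_erase T₀ _ hb).symm
    have hsplit2 : ∑ c ∈ T₀.erase b, D.θ b c
        = ∑ c ∈ (T₀.erase b).filter (fun c => D.Adj b c), D.θ b c
          + ∑ c ∈ (T₀.erase b).filter (fun c => ¬ D.Adj b c), D.θ b c :=
      (Finset.sum_filter_add_sum_filter_not _ _ _).symm
    have hnon : ∑ c ∈ (T₀.erase b).filter (fun c => ¬ D.Adj b c), D.θ b c = 0 := by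
      refine Finset.sum_eq_zero fun c hc => ?_
      have hc' := Finset.mem_filter.mp hc
      exact theta_zero (fun e => (Finset.mem_erase.mp hc'.1).1 e.symm) hc'.2
    have hF : ∑ c ∈ T₀.filter (fun c => D.Adj b c), D.θ b c = -2 := by
      have := hzb
      rw [hsplit, hsplit2, hnon, D.diag, hfiltereq b] at this
      omega
    have hallm1 : ∀ c ∈ T₀.filter (fun c => D.Adj b c), D.θ b c = -1 := by
      have hle : ∀ c ∈ T₀.filter (fun c => D.Adj b c), D.θ b c + 1 ≤ 0 := by
        intro c hc
        have := (Finset.mem_filter.mp hc).2.2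
        omega
      have hsum : ∑ c ∈ T₀.filter (fun c => D.Adj b c), (D.θ b c + 1) = 0 := by
        rw [Finset.sum_add_distrib, hF, Finset.sum_const]
        have hcard2 := hT₀deg b hb
        have hcardle : (T₀.filter (fun c => D.Adj b c)).card ≤ 2 := by
          have hle2 : ∑ c ∈ T₀.filter (fun c => D.Adj b c), D.θ b c
              ≤ -((T₀.filter (fun c => D.Adj b c)).card : ℤ) := by
            calc ∑ c ∈ T₀.filter (fun c => D.Adj b c), D.θ b c
                ≤ ∑ _c ∈ T₀.filter (fun c => D.Adj b c), (-1 : ℤ) := by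
                  refine Finset.sum_le_sum fun c hc => ?_
                  have := (Finset.mem_filter.mp hc).2.2
                  omega
              _ = -((T₀.filter (fun c => D.Adj b c)).card : ℤ) := by simp
          rw [hF] at hle2
          omega
        have : (T₀.filter (fun c => D.Adj b c)).card = 2 := le_antisymm hcardle hcard2
        rw [this]
        norm_num
      intro c hc
      have := (Finset.sum_eq_zero_iff_of_nonpos hle).mp hsum c hc
      omega
    intro c hc hadj
    exact hallm1 c (Finset.mem_filter.mpr ⟨hc, hadj⟩)
  refine ⟨fun _ => 1, fun b _ => one_pos, fun b hb c hc => ?_⟩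
  by_cases hbc : b = c
  · rw [hbc]
  by_cases hadj : D.Adj b c
  · rw [hneg1 b hb c hc hadj, hneg1 c hc b hb hadj.symm]
  · rw [theta_zero hbc hadj, theta_zero (fun e => hbc e.symm) fun h => hadj h.symm]

end S19
/-- for a dominant integral weight `λ` there is no infinite
sequence of colors every initial segment of which is `λ`-minuscule, i.e. no
infinite sequence `a` with `λ_{j}(a_{j}) = 1` for all `j`. -/
theorem statement19 (D : DynkinDiagram Γ) (lam : Γ → ℤ) (hdom : ∀ b : Γ, 0 ≤ lam b) :
    ¬ ∃ a : ℕ → Γ, ∀ j : ℕ, weightSeq D lam a j (a j) = 1 := by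
  classical
  rintro ⟨a, hyp⟩
  obtain ⟨N₀, hN₀⟩ := S19.exists_N0 (a := a)
  have hc₀S : a N₀ ∈ S19.SInf a := hN₀ N₀ le_rfl
  set T : Finset Γ := Finset.univ.filter (· ∈ S19.Sp D a (a N₀)) with hT
  have hmemT : ∀ x, x ∈ T ↔ x ∈ S19.Sp D a (a N₀) := by
    intro x; simp [hT]
  have hconnT : ∀ x ∈ T, ∀ y ∈ T,
      Relation.ReflTransGen (fun u v => u ∈ T ∧ v ∈ T ∧ D.Adj u v) x y := by
    intro x hx y hy
    refine Relation.ReflTransGen.mono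
      (fun u v (h : u ∈ S19.Sp D a (a N₀) ∧ v ∈ S19.Sp D a (a N₀) ∧ D.Adj u v) =>
        ⟨(hmemT u).mpr h.1, (hmemT v).mpr h.2.1, h.2.2⟩) _ _ ?_
    exact S19.Sp_conn' ((hmemT x).mp hx) ((hmemT y).mp hy)
  have hvan : ∀ n, N₀ ≤ n → a n ∉ T → ∀ c ∈ T, D.θ (a n) c = 0 := by
    intro n hn hanT c hcT
    have hanS : a n ∈ S19.SInf a := hN₀ n hn
    have hcSp : c ∈ S19.Sp D a (a N₀) := (hmemT c).mp hcT
    have hne : a n ≠ c := fun e => hanT ((hmemT (a n)).mpr (e ▸ hcSp))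
    by_contra h0
    have hadj : D.Adj (a n) c := ⟨hne, lt_of_le_of_ne (D.offdiag_nonpos _ _ hne) h0⟩
    exact hanT ((hmemT _).mpr (S19.Sp_closed hc₀S hcSp hadj.symm hanS))
  -- fire-time machinery
  have hfind : ∀ (n : ℕ) (c : Γ), c ∈ S19.SInf a → ∃ m, n ≤ m ∧ a m = c := fun n c hc => hc n
  set nxt : ℕ → ℕ := fun n =>
    (Finset.univ.sup fun c : Γ => if h : c ∈ S19.SInf a then Nat.find (hfind n c h) else n) + 1
    with hnxtdef
  have hnxt_gt : ∀ n, n < nxt n := by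
    intro n
    have h1 : n ≤ Nat.find (hfind n (a N₀) hc₀S) := (Nat.find_spec (hfind n (a N₀) hc₀S)).1
    have h2 : (if h : a N₀ ∈ S19.SInf a then Nat.find (hfind n (a N₀) h) else n)
        ≤ Finset.univ.sup fun c : Γ =>
          if h : c ∈ S19.SInf a then Nat.find (hfind n c h) else n :=
      Finset.le_sup (f := fun c : Γ => if h : c ∈ S19.SInf a then Nat.find (hfind n c h) else n)
        (Finset.mem_univ (a N₀))
    rw [dif_pos hc₀S] at h2
    have h3 : nxt n = (Finset.univ.sup fun c : Γ =>
        if h : c ∈ S19.SInf a then Nat.find (hfind n c h) else n) + 1 := rfl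
    omega
  have hnxt_fire : ∀ n, ∀ c, c ∈ S19.SInf a → ∃ j, n ≤ j ∧ j < nxt n ∧ a j = c := by
    intro n c hc
    refine ⟨Nat.find (hfind n c hc), (Nat.find_spec (hfind n c hc)).1, ?_,
      (Nat.find_spec (hfind n c hc)).2⟩
    have h2 : (if h : c ∈ S19.SInf a then Nat.find (hfind n c h) else n)
        ≤ Finset.univ.sup fun c : Γ =>
          if h : c ∈ S19.SInf a then Nat.find (hfind n c h) else n :=
      Finset.le_sup (f := fun c : Γ => if h : c ∈ S19.SInf a then Nat.find (hfind n c h) else n)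
        (Finset.mem_univ c)
    rw [dif_pos hc] at h2
    have h3 : nxt n = (Finset.univ.sup fun c : Γ =>
        if h : c ∈ S19.SInf a then Nat.find (hfind n c h) else n) + 1 := rfl
    omega
  set N : ℕ → ℕ := fun k => Nat.rec N₀ (fun _ ih => nxt ih) k with hNdef
  have hNs : ∀ k, N (k + 1) = nxt (N k) := fun k => rfl
  have hNlt : ∀ k, N k < N (k + 1) := fun k => by rw [hNs]; exact hnxt_gt (N k)
  have hNmono : StrictMono N := strictMono_nat_of_lt_succ hNlt
  have hNge : ∀ k, N₀ ≤ N k := by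
    intro k
    induction k with
    | zero => exact le_rfl
    | succ k ih => exact le_trans ih (le_of_lt (hNlt k))
  -- pigeonhole on the states along the times N k
  set φ : ℕ → (↥T → Fin 3) := fun k c =>
    ⟨(weightSeq D lam a (N k) c.1 + 1).toNat, by
      have e1 := S19.ws_ge D lam a hdom hyp (N k) c.1
      have e2 := S19.ws_le_one D lam a hyp
        (S19.Sp_sub hc₀S ((hmemT c.1).mp c.2)) (N k)
      omega⟩ with hφdef
  have hsteq : ∀ k l : ℕ, φ k = φ l → ∀ c ∈ T,
      weightSeq D lam a (N k) c = weightSeq D lam a (N l) c := by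
    intro k l h c hc
    have h2 := congrArg Fin.val (congrFun h ⟨c, hc⟩)
    simp only [hφdef] at h2
    have e1 := S19.ws_ge D lam a hdom hyp (N k) c
    have e2 := S19.ws_ge D lam a hdom hyp (N l) c
    omega
  -- the main contradiction, given a repeated state
  have key : ∀ k l : ℕ, k < l →
      (∀ c ∈ T, weightSeq D lam a (N k) c = weightSeq D lam a (N l) c) → False := by
    intro k l hkl hstates
    set n₁ := N k with hn₁def
    set n₂ := N l with hn₂def
    have hn₁N₀ : N₀ ≤ n₁ := hNge k
    have hn12 : n₁ ≤ n₂ := le_of_lt (hNmono hkl)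
    set w : Γ → ℕ := S19.mct a n₁ n₂ with hwdef
    have hwpos : ∀ c ∈ T, 1 ≤ w c := by
      intro c hc
      obtain ⟨j, hj1, hj2, hj3⟩ := hnxt_fire n₁ c (S19.Sp_sub hc₀S ((hmemT c).mp hc))
      have hj2' : j < n₂ := by
        have h1 : nxt n₁ ≤ n₂ := by
          rw [hn₁def, hn₂def, ← hNs k]
          exact hNmono.monotone hkl
        omega
      have := S19.mct_pos (a := a) hj1 hj2'
      rw [hj3] at this
      exact this
    have hvan' : ∀ n, n₁ ≤ n → a n ∉ T → ∀ c ∈ T, D.θ (a n) c = 0 :=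
      fun n hn => hvan n (le_trans hn₁N₀ hn)
    have hnull : ∀ c ∈ T, ∑ b ∈ T, (w b : ℤ) * D.θ b c = 0 := by
      intro c hc
      have h1 := S19.rel lam hyp T n₁ hvan' n₂ hn12 c hc
      have h2 := hstates c hc
      rw [← hwdef] at h1
      linarith
    obtain ⟨d, hdpos, hdsym⟩ := S19.symmetrizer D T
      ⟨a N₀, (hmemT _).mpr S19.Sp_self⟩ hconnT w hwpos hnull
    -- the conserved quadratic identity at the end of the window
    have hG := S19.Ginv lam hyp T n₁ hvan' d hdsym n₂ hn12
    rw [← hwdef] at hG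
    have hQ0 : ∑ b ∈ T, ∑ c ∈ T, (w b : ℚ) * (w c : ℚ) * ((D.θ b c : ℚ) * d c) = 0 := by
      rw [Finset.sum_comm]
      refine Finset.sum_eq_zero fun c hc => ?_
      have hre : ∑ b ∈ T, (w b : ℚ) * (w c : ℚ) * ((D.θ b c : ℚ) * d c)
          = ((∑ b ∈ T, (w b : ℤ) * D.θ b c : ℤ) : ℚ) * ((w c : ℚ) * d c) := by
        push_cast
        rw [Finset.sum_mul]
        exact Finset.sum_congr rfl fun b _ => by ring
      rw [hre, hnull c hc]
      norm_num
    have hT0 : ∑ c ∈ T, (w c : ℚ) * d c * (weightSeq D lam a n₁ c : ℚ) = 0 := by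
      rw [hQ0] at hG
      have : ∀ c ∈ T, (w c : ℚ) * d c * (weightSeq D lam a n₁ c : ℚ)
          = (S19.mct a n₁ n₂ c : ℚ) * d c * (weightSeq D lam a n₁ c : ℚ) := by
        intro c _; rw [← hwdef]
      rw [Finset.sum_congr rfl this]
      linarith
    -- the monotone functional
    set Tf : ℕ → ℚ := fun n => ∑ c ∈ T, (w c : ℚ) * d c * (weightSeq D lam a n c : ℚ)
      with hTfdef
    have hrightnull : ∀ b ∈ T, ∑ c ∈ T, (w c : ℚ) * d c * (D.θ b c : ℚ) = 0 := by
      intro b hb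
      have h1 : ∀ c ∈ T, (w c : ℚ) * d c * (D.θ b c : ℚ)
          = (w c : ℚ) * (D.θ c b : ℚ) * d b := by
        intro c hc
        have := hdsym b hb c hc
        calc (w c : ℚ) * d c * (D.θ b c : ℚ) = (w c : ℚ) * ((D.θ b c : ℚ) * d c) := by ring
          _ = (w c : ℚ) * ((D.θ c b : ℚ) * d b) := by rw [this]
          _ = (w c : ℚ) * (D.θ c b : ℚ) * d b := by ring
      rw [Finset.sum_congr rfl h1]
      have h2 : ∑ c ∈ T, (w c : ℚ) * (D.θ c b : ℚ) * d b
          = ((∑ c ∈ T, (w c : ℤ) * D.θ c b : ℤ) : ℚ) * d b := by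
        push_cast
        rw [Finset.sum_mul]
      rw [h2, hnull b hb]
      norm_num
    have hmono : ∀ n, Tf n ≤ Tf (n + 1) := by
      intro n
      have hdiff : Tf (n + 1)
          = Tf n - ∑ c ∈ T, (w c : ℚ) * d c * (D.θ (a n) c : ℚ) := by
        rw [hTfdef]
        simp only
        rw [← Finset.sum_sub_distrib]
        refine Finset.sum_congr rfl fun c hc => ?_
        rw [S19.ws_succ D lam a hyp]
        push_cast
        ring
      by_cases han : a n ∈ T
      · rw [hdiff, hrightnull (a n) han]
        norm_num
      · have hle : ∑ c ∈ T, (w c : ℚ) * d c * (D.θ (a n) c : ℚ) ≤ 0 := by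
          refine Finset.sum_nonpos fun c hc => ?_
          have hne : a n ≠ c := fun e => han (e ▸ hc)
          have hθ : (D.θ (a n) c : ℚ) ≤ 0 := by
            exact_mod_cast D.offdiag_nonpos _ _ hne
          have hwd : 0 ≤ (w c : ℚ) * d c :=
            mul_nonneg (by positivity) (le_of_lt (hdpos c hc))
          exact mul_nonpos_of_nonneg_of_nonpos hwd hθ
        rw [hdiff]
        linarith
    have hmono' : ∀ m n : ℕ, m ≤ n → Tf m ≤ Tf n := by
      intro m n h
      induction n, h using Nat.le_induction with
      | base => exact le_rfl
      | succ n hn ih => exact le_trans ih (hmono n)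
    -- the first firing time in the component
    have hex : ∃ n, a n ∈ T := ⟨N₀, (hmemT _).mpr S19.Sp_self⟩
    set t := Nat.find hex with htdef
    have htT : a t ∈ T := Nat.find_spec hex
    have htle : t ≤ N₀ := Nat.find_min' hex ((hmemT _).mpr S19.Sp_self)
    have hWt : ∀ c ∈ T, 0 ≤ weightSeq D lam a t c := by
      intro c hc
      have hstepup : ∀ j, j ≤ t → 0 ≤ weightSeq D lam a j c := by
        intro j hj
        induction j with
        | zero => exact hdom c
        | succ j ih =>
          have hjt : j < t := hj
          have hanT : a j ∉ T := Nat.find_min hex hjt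
          have hne : a j ≠ c := fun e => hanT (e ▸ hc)
          exact le_trans (ih (le_of_lt hjt)) (S19.ws_mono D lam a hyp hne)
      exact hstepup t le_rfl
    have hTt : 0 < Tf t := by
      have hterm : (w (a t) : ℚ) * d (a t) * (weightSeq D lam a t (a t) : ℚ)
          = (w (a t) : ℚ) * d (a t) := by
        rw [hyp t]; norm_num
      have hpos : 0 < (w (a t) : ℚ) * d (a t) := by
        have h1 : (1 : ℚ) ≤ (w (a t) : ℚ) := by exact_mod_cast hwpos (a t) htT
        have h2 := hdpos (a t) htT
        nlinarith
      have hsingle : (w (a t) : ℚ) * d (a t) * (weightSeq D lam a t (a t) : ℚ) ≤ Tf t := by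
        rw [hTfdef]
        refine Finset.single_le_sum (f := fun c =>
          (w c : ℚ) * d c * (weightSeq D lam a t c : ℚ)) (fun c hc => ?_) htT
        have hwd : 0 ≤ (w c : ℚ) * d c :=
          mul_nonneg (by positivity) (le_of_lt (hdpos c hc))
        have hws : (0 : ℚ) ≤ (weightSeq D lam a t c : ℚ) := by exact_mod_cast hWt c hc
        positivity
      rw [hterm] at hsingle
      linarith
    have hcontr : Tf t ≤ Tf n₁ := hmono' t n₁ (le_trans htle hn₁N₀)
    have hTfn₁ : Tf n₁ = 0 := hT0
    linarith
  obtain ⟨k, l, hkl, hphi⟩ := Finite.exists_ne_map_eq_of_infinite φ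
  rcases hkl.lt_or_gt with hlt | hlt
  · exact key k l hlt (hsteq k l hphi)
  · exact key l k hlt (hsteq l k hphi.symm)

end GCP
end
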